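/- arXiv:1808.10828 — 8 statements merged into one kernel-verified Lean document; each statement's English description precedes it below -/
import Mathlib

section
/- Suppose C lies in the copula domain of attraction of the extreme-value copula C_∞ associated with the stable tail dependence function L, and Condition (SO)_p holds with a continuous non-null limit function S_p. Then there exists ρ_p ≤ 0 such that α_p is regularly varying at infinity of index ρ_p, and S_p is homogeneous of order 1 − ρ_p, i.e. S_p(s·x) = s^{1−ρ_p}·S_p(x) for all s > 0 and x ∈ [0,∞)^d. -/
open Filter Topology

noncomputable section

/-- A `d`-variate stable tail dependence function: homogeneous of order 1, convex,
`L(e_j) = 1`, and `max ≤ L ≤ sum` on the nonnegative orthant. -/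
def IsSTDF (d : ℕ) (L : (Fin d → ℝ) → ℝ) : Prop :=
  (∀ s : ℝ, 0 < s → ∀ x : Fin d → ℝ, (∀ j, 0 ≤ x j) → L (s • x) = s * L x) ∧
  ConvexOn ℝ (Set.Ici (0 : Fin d → ℝ)) L ∧
  (∀ j : Fin d, L (fun i => if i = j then (1 : ℝ) else 0) = 1) ∧
  (∀ x : Fin d → ℝ, (∀ j, 0 ≤ x j) → (∀ j, x j ≤ L x) ∧ L x ≤ ∑ j, x j)

/-- The only properties of a copula that are used: `C(1,…,1) = 1`, `C(u) ≤ min_j u_j`,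
and the ℓ¹-Lipschitz bound on the unit cube. -/
def IsCopulaLike (d : ℕ) (C : (Fin d → ℝ) → ℝ) : Prop :=
  C (fun _ => 1) = 1 ∧
  (∀ u : Fin d → ℝ, (∀ j, 0 ≤ u j ∧ u j ≤ 1) → ∀ j, C u ≤ u j) ∧
  (∀ u v : Fin d → ℝ, (∀ j, 0 ≤ u j ∧ u j ≤ 1) → (∀ j, 0 ≤ v j ∧ v j ≤ 1) →
    |C u - C v| ≤ ∑ j, |u j - v j|)

/-- The extreme-value copula associated with the stable tail dependence function `L`:
`C_∞(u) = exp(−L(−log u_1,…,−log u_d))` for `u ∈ (0,1]^d`, and `0` if some `u_j = 0`. -/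
def CinfFun (d : ℕ) (L : (Fin d → ℝ) → ℝ) (u : Fin d → ℝ) : ℝ :=
  if ∀ j, 0 < u j then Real.exp (-(L (fun j => -Real.log (u j)))) else 0

/-- Regular variation at infinity of index `ρ`. -/
def RegVary (f : ℝ → ℝ) (ρ : ℝ) : Prop :=
  ∀ x : ℝ, 0 < x → Filter.Tendsto (fun t => f (t * x) / f t) Filter.atTop (nhds (x ^ ρ))

/-- POT form of the copula domain of attraction:
`t(1 − C(1 − x/t)) → L(x)` uniformly on `[0,T]^d` for every `T > 0`. -/
def PotDOA (d : ℕ) (C L : (Fin d → ℝ) → ℝ) : Prop :=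
  ∀ T : ℝ, 0 < T → TendstoUniformlyOn
    (fun (t : ℝ) (x : Fin d → ℝ) => t * (1 - C (fun j => 1 - x j / t))) L Filter.atTop
    (Set.Icc (0 : Fin d → ℝ) (fun _ => T))

/-- BM form of the copula domain of attraction: `C(u^{1/r})^r → C_∞(u)` pointwise. -/
def BmDOA (d : ℕ) (C Cinf : (Fin d → ℝ) → ℝ) : Prop :=
  ∀ u : Fin d → ℝ, (∀ j, 0 ≤ u j ∧ u j ≤ 1) →
    Filter.Tendsto (fun r : ℝ => C (fun j => u j ^ (1/r)) ^ r) Filter.atTop (nhds (Cinf u))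

/-- The uniform-convergence part of Condition (SO)_p with auxiliary function `αp`
and limit `Sp`. -/
def SOpot (d : ℕ) (C L Sp : (Fin d → ℝ) → ℝ) (αp : ℝ → ℝ) : Prop :=
  ∀ T : ℝ, 0 < T → TendstoUniformlyOn
    (fun (t : ℝ) (x : Fin d → ℝ) => (t * (1 - C (fun j => 1 - x j / t)) - L x) / αp t)
    Sp Filter.atTop (Set.Icc (0 : Fin d → ℝ) (fun _ => T))

/-- The uniform-convergence part of Condition (SO)_b with auxiliary function `αb`
and limit `Sb`. -/
def SObm (d : ℕ) (C Cinf Sb : (Fin d → ℝ) → ℝ) (αb : ℝ → ℝ) : Prop :=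
  ∀ δ : ℝ, 0 < δ → δ < 1 → TendstoUniformlyOn
    (fun (r : ℝ) (u : Fin d → ℝ) => (C (fun j => u j ^ (1/r)) ^ r - Cinf u) / αb r)
    Sb Filter.atTop (Set.Icc (fun _ => δ) (fun _ => 1))

/-- Lemma 2.2 (i). Under (SO)_p with continuous non-null `Sp`, the auxiliary
function `αp` is regularly varying of some index `ρ_p ≤ 0` and `Sp` is homogeneous of
order `1 − ρ_p`. -/
theorem statement0 {d : ℕ} (C L Sp : (Fin d → ℝ) → ℝ) (αp : ℝ → ℝ)
    (hL : IsSTDF d L) (hC : IsCopulaLike d C)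
    (hDOA : PotDOA d C L)
    (hαpos : ∀ t : ℝ, 0 < t → 0 < αp t)
    (hα0 : Filter.Tendsto αp Filter.atTop (nhds 0))
    (hScont : ContinuousOn Sp (Set.Ici (0 : Fin d → ℝ)))
    (hSnonnull : ∃ x : Fin d → ℝ, (∀ j, 0 ≤ x j) ∧ Sp x ≠ 0)
    (hSO : SOpot d C L Sp αp) :
    ∃ ρp : ℝ, ρp ≤ 0 ∧ RegVary αp ρp ∧
      ∀ s : ℝ, 0 < s → ∀ x : Fin d → ℝ, (∀ j, 0 ≤ x j) →
        Sp (s • x) = s ^ (1 - ρp) * Sp x := by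
  obtain ⟨x₀, hx₀, hSx₀⟩ := hSnonnull
  set F : ℝ → (Fin d → ℝ) → ℝ :=
    fun t x => (t * (1 - C (fun j => 1 - x j / t)) - L x) / αp t with hF
  -- pointwise convergence
  have hpt : ∀ x : Fin d → ℝ, (∀ j, 0 ≤ x j) →
      Filter.Tendsto (fun t => F t x) Filter.atTop (nhds (Sp x)) := by
    intro x hx
    have hT : (0:ℝ) < 1 + ∑ j, x j := by
      have : (0:ℝ) ≤ ∑ j, x j := Finset.sum_nonneg fun j _ => hx j
      linarith
    refine (hSO _ hT).tendsto_at ?_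
    constructor
    · intro j; exact hx j
    · intro j
      have h1 : x j ≤ ∑ i, x i := Finset.single_le_sum (fun i _ => hx i) (Finset.mem_univ j)
      show x j ≤ 1 + ∑ i, x i
      linarith
  -- key identity
  have hid : ∀ s : ℝ, 0 < s → ∀ x : Fin d → ℝ, (∀ j, 0 ≤ x j) → ∀ t : ℝ, 0 < t →
      F t (s • x) = s * F (t/s) x * (αp (t/s) / αp t) := by
    intro s hs x hx t ht
    have ht' : 0 < t / s := div_pos ht hs
    have hα := (hαpos t ht).ne'
    have hα' := (hαpos _ ht').ne'
    have hCarg : (fun j => 1 - (s • x) j / t) = (fun j => 1 - x j / (t/s)) := by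
      funext j
      have : (s • x) j = s * x j := rfl
      rw [this]
      rw [div_div_eq_mul_div]
      congr 1
      field_simp
    have hLs : L (s • x) = s * L x := hL.1 s hs x hx
    simp only [hF]
    rw [hCarg, hLs]
    field_simp
    ring_nf
    congr 4
    funext j
    ring
  have hdiv : ∀ s : ℝ, 0 < s → Filter.Tendsto (fun t : ℝ => t / s) Filter.atTop Filter.atTop :=
    fun s hs => tendsto_id.atTop_div_const hs
  -- lemma A
  have hA : ∀ s : ℝ, 0 < s → ∀ x : Fin d → ℝ, (∀ j, 0 ≤ x j) →
      Filter.Tendsto (fun t => s * F (t/s) x * (αp (t/s) / αp t)) Filter.atTop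
        (nhds (Sp (s • x))) := by
    intro s hs x hx
    have hsx : ∀ j, 0 ≤ (s • x) j := fun j => mul_nonneg hs.le (hx j)
    refine Filter.Tendsto.congr' ?_ (hpt _ hsx)
    filter_upwards [Filter.eventually_gt_atTop (0:ℝ)] with t ht
    exact hid s hs x hx t ht
  set c : ℝ → ℝ := fun s => Sp (s • x₀) / (s * Sp x₀) with hc
  -- lemma B : ratio convergence
  have hB : ∀ s : ℝ, 0 < s →
      Filter.Tendsto (fun t => αp (t/s) / αp t) Filter.atTop (nhds (c s)) := by
    intro s hs
    have hcomp : Filter.Tendsto (fun t => F (t/s) x₀) Filter.atTop (nhds (Sp x₀)) :=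
      (hpt x₀ hx₀).comp (hdiv s hs)
    have h1 : Filter.Tendsto (fun t => s * F (t/s) x₀) Filter.atTop (nhds (s * Sp x₀)) :=
      hcomp.const_mul s
    have hden : s * Sp x₀ ≠ 0 := mul_ne_zero hs.ne' hSx₀
    have h2 := (hA s hs x₀ hx₀).div h1 hden
    refine Filter.Tendsto.congr' ?_ h2
    filter_upwards [hcomp.eventually_ne hSx₀] with t hne
    exact mul_div_cancel_left₀ _ (mul_ne_zero hs.ne' hne)
  -- homogeneity pre-form
  have hhom : ∀ s : ℝ, 0 < s → ∀ x : Fin d → ℝ, (∀ j, 0 ≤ x j) →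
      Sp (s • x) = s * Sp x * c s := by
    intro s hs x hx
    have h1 := hA s hs x hx
    have h2 : Filter.Tendsto (fun t => s * F (t/s) x * (αp (t/s) / αp t)) Filter.atTop
        (nhds (s * Sp x * c s)) :=
      (((hpt x hx).comp (hdiv s hs)).const_mul s).mul (hB s hs)
    exact tendsto_nhds_unique h1 h2
  have hc1 : c 1 = 1 := by
    simp only [hc, one_smul, one_mul]
    exact div_self hSx₀
  have hcmul : ∀ a b : ℝ, 0 < a → 0 < b → c (a * b) = c a * c b := by
    intro a b ha hb
    have hbx : ∀ j, 0 ≤ (b • x₀) j := fun j => mul_nonneg hb.le (hx₀ j)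
    have h1 : Sp ((a * b) • x₀) = (a * b) * Sp x₀ * c (a * b) := hhom _ (mul_pos ha hb) x₀ hx₀
    have h2 : Sp ((a * b) • x₀) = a * Sp (b • x₀) * c a := by
      rw [mul_smul]; exact hhom a ha _ hbx
    have h3 : Sp (b • x₀) = b * Sp x₀ * c b := hhom b hb x₀ hx₀
    rw [h3] at h2
    have heq := h1.symm.trans h2
    have hcancel : a * b * Sp x₀ ≠ 0 := mul_ne_zero (mul_ne_zero ha.ne' hb.ne') hSx₀
    have h4 : (a * b * Sp x₀) * c (a * b) = (a * b * Sp x₀) * (c a * c b) := by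
      linear_combination heq
    exact mul_left_cancel₀ hcancel h4
  have hcne : ∀ a : ℝ, 0 < a → c a ≠ 0 := by
    intro a ha
    have h := hcmul a a⁻¹ ha (inv_pos.mpr ha)
    rw [mul_inv_cancel₀ ha.ne', hc1] at h
    exact left_ne_zero_of_mul_eq_one h.symm
  have hcpos : ∀ a : ℝ, 0 < a → 0 < c a := by
    intro a ha
    have hs : 0 < Real.sqrt a := Real.sqrt_pos.mpr ha
    have h := hcmul _ _ hs hs
    rw [Real.mul_self_sqrt ha.le] at h
    rw [h]
    exact (mul_self_pos).mpr (hcne _ hs)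
  -- continuity of c on (0,∞)
  have hccont : ContinuousOn c (Set.Ioi (0:ℝ)) := by
    apply ContinuousOn.div
    · refine hScont.comp ((continuous_id.smul continuous_const).continuousOn) ?_
      intro s hs
      intro j
      exact mul_nonneg (le_of_lt hs) (hx₀ j)
    · exact (continuous_id.mul continuous_const).continuousOn
    · intro s hs
      exact mul_ne_zero (ne_of_gt hs) hSx₀
  set g : ℝ → ℝ := fun u => Real.log (c (Real.exp u)) with hg
  have hgadd : ∀ u v : ℝ, g (u + v) = g u + g v := by
    intro u v
    simp only [hg]
    rw [Real.exp_add, hcmul _ _ (Real.exp_pos u) (Real.exp_pos v),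
      Real.log_mul (hcne _ (Real.exp_pos u)) (hcne _ (Real.exp_pos v))]
  have hgcont : Continuous g := by
    refine continuous_iff_continuousAt.mpr fun u => ?_
    have h1 : ContinuousAt c (Real.exp u) :=
      hccont.continuousAt (Ioi_mem_nhds (Real.exp_pos u))
    have h2 : ContinuousAt (fun s => Real.log (c s)) (Real.exp u) :=
      (Real.continuousAt_log (hcne _ (Real.exp_pos u))).comp h1
    exact h2.comp Real.continuous_exp.continuousAt
  have hglin : ∀ u : ℝ, g u = u * g 1 := by
    intro u
    have h0 := ((AddMonoidHom.mk' g hgadd).toRealLinearMap hgcont).map_smul u (1:ℝ)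
    simp only [smul_eq_mul, mul_one] at h0
    exact h0
  set σ : ℝ := g 1 with hσ
  have hcrpow : ∀ s : ℝ, 0 < s → c s = s ^ σ := by
    intro s hs
    have h1 : g (Real.log s) = Real.log (c s) := by
      simp only [hg]; rw [Real.exp_log hs]
    have h2 : Real.log (c s) = Real.log s * σ := by rw [← h1, hglin]
    rw [Real.rpow_def_of_pos hs, ← h2, Real.exp_log (hcpos s hs)]
  refine ⟨-σ, ?_, ?_, ?_⟩
  rotate_left
  · -- RegVary
    intro x hx
    have h := hB x⁻¹ (inv_pos.mpr hx)
    have heq : (fun t : ℝ => αp (t / x⁻¹) / αp t) = fun t => αp (t * x) / αp t := by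
      funext t; rw [show t / x⁻¹ = t * x by rw [div_eq_mul_inv, inv_inv]]
    rw [heq] at h
    have : c x⁻¹ = x ^ (-σ) := by
      rw [hcrpow _ (inv_pos.mpr hx), Real.inv_rpow hx.le, ← Real.rpow_neg hx.le]
    rwa [this] at h
  · -- homogeneity
    intro s hs x hx
    rw [hhom s hs x hx, hcrpow s hs, sub_neg_eq_add, Real.rpow_add hs, Real.rpow_one]
    ring
  · -- -σ ≤ 0
    by_contra hcon
    push_neg at hcon
    have hρ : (0:ℝ) < -σ := hcon
    have h2 : (1:ℝ) < (2:ℝ) ^ (-σ) := by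
      rw [show (1:ℝ) = (2:ℝ) ^ (0:ℝ) by simp]
      exact Real.rpow_lt_rpow_left_iff (by norm_num) |>.mpr hρ
    have hRV2 : Filter.Tendsto (fun t => αp (t * 2) / αp t) Filter.atTop
        (nhds ((2:ℝ) ^ (-σ))) := by
      have h := hB (2:ℝ)⁻¹ (by norm_num)
      have heq : (fun t : ℝ => αp (t / (2:ℝ)⁻¹) / αp t) = fun t => αp (t * 2) / αp t := by
        funext t; rw [show t / (2:ℝ)⁻¹ = t * 2 by rw [div_eq_mul_inv, inv_inv]]
      rw [heq] at h
      have : c (2:ℝ)⁻¹ = (2:ℝ) ^ (-σ) := by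
        rw [hcrpow _ (by norm_num : (0:ℝ) < (2:ℝ)⁻¹), Real.inv_rpow (by norm_num),
          ← Real.rpow_neg (by norm_num)]
      rwa [this] at h
    have hev : ∀ᶠ t in Filter.atTop, 1 < αp (t * 2) / αp t :=
      hRV2.eventually (lt_mem_nhds h2)
    obtain ⟨t₁, ht₁⟩ := hev.exists_forall_of_atTop
    set t₀ : ℝ := max t₁ 1 with ht₀
    have ht₀1 : (1:ℝ) ≤ t₀ := le_max_right _ _
    have ht₀pos : 0 < t₀ := lt_of_lt_of_le one_pos ht₀1
    have hstep : ∀ n : ℕ, αp t₀ ≤ αp (t₀ * 2 ^ n) := by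
      intro n
      induction n with
      | zero => simp
      | succ n ih =>
        have htn : (1:ℝ) ≤ 2 ^ n := one_le_pow₀ (by norm_num)
        have htpos : 0 < t₀ * 2 ^ n := mul_pos ht₀pos (by positivity)
        have hge : t₁ ≤ t₀ * 2 ^ n :=
          le_trans (le_max_left _ _) (le_mul_of_one_le_right ht₀pos.le htn)
        have hr := ht₁ _ hge
        have hlt : αp (t₀ * 2 ^ n) < αp (t₀ * 2 ^ n * 2) :=
          (one_lt_div (hαpos _ htpos)).mp hr
        have : t₀ * 2 ^ n * 2 = t₀ * 2 ^ (n + 1) := by ring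
        rw [this] at hlt
        exact le_trans ih hlt.le
    have hsmall : ∀ᶠ t in Filter.atTop, αp t < αp t₀ :=
      hα0.eventually (gt_mem_nhds (hαpos t₀ ht₀pos))
    obtain ⟨T, hT⟩ := hsmall.exists_forall_of_atTop
    obtain ⟨n, hn⟩ := pow_unbounded_of_one_lt T (by norm_num : (1:ℝ) < 2)
    have hTn : T ≤ t₀ * 2 ^ n :=
      le_trans hn.le (le_mul_of_one_le_left (by positivity) ht₀1)
    exact absurd (hstep n) (not_le.mpr (hT _ hTn))
end
end

section
/- Suppose C lies in the copula domain of attraction of the extreme-value copula C_∞ associated with the stable tail dependence function L, and Condition (SO)_b holds with a continuous non-null limit function S_b. Then there exists ρ_b ≤ 0 such that α_b is regularly varying at infinity of index ρ_b, and S_b(u^s)/C_∞(u^s) = s^{1−ρ_b}·S_b(u)/C_∞(u) for all s > 0 and u ∈ (0,1]^d, where u^s := (u_1^s,…,u_d^s). -/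
open Filter Topology

noncomputable section

namespace S1Aux

variable {d : ℕ} {C L Sb : (Fin d → ℝ) → ℝ} {αb : ℝ → ℝ}

/-- `C_∞` is positive on `(0,1]^d` (in fact on the positive orthant). -/
lemma cinf_pos (L : (Fin d → ℝ) → ℝ) {u : Fin d → ℝ} (hu : ∀ j, 0 < u j) :
    0 < CinfFun d L u := by
  rw [CinfFun, if_pos hu]; exact Real.exp_pos _

/-- Max-stability: `C_∞(u^s) = C_∞(u)^s`. -/
lemma cinf_pow (hL : IsSTDF d L) {u : Fin d → ℝ} (hu : ∀ j, 0 < u j ∧ u j ≤ 1)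
    {s : ℝ} (hs : 0 < s) :
    CinfFun d L (fun j => u j ^ s) = CinfFun d L u ^ s := by
  have hu' : ∀ j, 0 < u j := fun j => (hu j).1
  have hus : ∀ j, (0:ℝ) < u j ^ s := fun j => Real.rpow_pos_of_pos (hu' j) s
  rw [CinfFun, CinfFun, if_pos hus, if_pos hu']
  have hlog : (fun j => -Real.log (u j ^ s)) = s • (fun j => -Real.log (u j)) := by
    funext j
    rw [Real.log_rpow (hu' j)]
    simp [smul_eq_mul, mul_comm]
  rw [hlog, hL.1 s hs _ (fun j => neg_nonneg.mpr (Real.log_nonpos (hu' j).le (hu j).2)),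
    ← Real.exp_mul]
  congr 1
  ring

/-- `u^s ∈ (0,1]^d` whenever `u ∈ (0,1]^d` and `s > 0`. -/
lemma pow_mem {u : Fin d → ℝ} (hu : ∀ j, 0 < u j ∧ u j ≤ 1) {s : ℝ} (hs : 0 < s) :
    ∀ j, 0 < u j ^ s ∧ u j ^ s ≤ 1 := fun j =>
  ⟨Real.rpow_pos_of_pos (hu j).1 s, Real.rpow_le_one (hu j).1.le (hu j).2 hs.le⟩

/-- Pointwise convergence in (SO)_b at each `u ∈ (0,1]^d`. -/
lemma so_pointwise (hSO : SObm d C (CinfFun d L) Sb αb) {u : Fin d → ℝ}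
    (hu : ∀ j, 0 < u j ∧ u j ≤ 1) :
    Tendsto (fun r : ℝ => (C (fun j => u j ^ (1/r)) ^ r - CinfFun d L u) / αb r)
      atTop (𝓝 (Sb u)) := by
  obtain ⟨δ, hδ0, hδ1, hδu⟩ : ∃ δ : ℝ, 0 < δ ∧ δ < 1 ∧ ∀ j, δ ≤ u j := by
    rcases isEmpty_or_nonempty (Fin d) with h | h
    · exact ⟨1/2, by norm_num, by norm_num, fun j => (h.false j).elim⟩
    · refine ⟨min (Finset.univ.inf' Finset.univ_nonempty u) (1/2), ?_, ?_, fun j => ?_⟩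
      · exact lt_min (Finset.lt_inf'_iff _ |>.mpr fun i _ => (hu i).1) (by norm_num)
      · exact lt_of_le_of_lt (min_le_right _ _) (by norm_num)
      · exact le_trans (min_le_left _ _) (Finset.inf'_le _ (Finset.mem_univ j))
  exact (hSO δ hδ0 hδ1).tendsto_at
    (Set.mem_Icc.mpr ⟨fun j => hδu j, fun j => (hu j).2⟩)

/-- Eventually `C(u^{1/r}) ≥ 0`. -/
lemma eventually_C_nonneg (hC : IsCopulaLike d C) {u : Fin d → ℝ}
    (hu : ∀ j, 0 < u j ∧ u j ≤ 1) :
    ∀ᶠ r : ℝ in atTop, 0 ≤ C (fun j => u j ^ (1/r)) := by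
  have hten : Tendsto (fun r : ℝ => ∑ j, |(1:ℝ) - u j ^ (1/r)|) atTop (𝓝 0) := by
    have hcoord : ∀ j : Fin d, Tendsto (fun r : ℝ => u j ^ (1/r)) atTop (𝓝 1) := by
      intro j
      have h1 : Tendsto (fun r : ℝ => 1/r) atTop (𝓝 0) := by
        simpa [one_div] using tendsto_inv_atTop_zero
      have h2 : ContinuousAt (fun y : ℝ => u j ^ y) 0 :=
        Real.continuousAt_const_rpow (ne_of_gt (hu j).1)
      simpa [Function.comp_def, Real.rpow_zero] using h2.tendsto.comp h1
    have habs : ∀ j : Fin d, Tendsto (fun r : ℝ => |(1:ℝ) - u j ^ (1/r)|) atTop (𝓝 0) := by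
      intro j
      have h := ((tendsto_const_nhds (x := (1:ℝ))).sub (hcoord j)).abs
      rw [sub_self] at h
      simpa using h
    have hsum := tendsto_finset_sum (Finset.univ : Finset (Fin d)) (fun j _ => habs j)
    simpa using hsum
  have hsmall : ∀ᶠ r : ℝ in atTop, ∑ j, |(1:ℝ) - u j ^ (1/r)| < 1/2 :=
    hten.eventually (gt_mem_nhds (by norm_num))
  filter_upwards [hsmall, eventually_gt_atTop (0:ℝ)] with r hr hr0
  have hmem : ∀ j, 0 ≤ u j ^ (1/r) ∧ u j ^ (1/r) ≤ 1 := fun j =>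
    ⟨(Real.rpow_pos_of_pos (hu j).1 _).le,
      Real.rpow_le_one (hu j).1.le (hu j).2 (by positivity)⟩
  have hlip := hC.2.2 (fun _ => 1) (fun j => u j ^ (1/r))
    (fun j => ⟨zero_le_one, le_refl 1⟩) hmem
  rw [hC.1] at hlip
  have h2 := abs_le.mp (hlip.trans hr.le)
  linarith [h2.2]

/-- Core limit: `(A_r(u)^s − C_∞(u)^s)/α_b(r) → s·C_∞(u)^{s−1}·S_b(u)`. -/
lemma core_limit (hαpos : ∀ r : ℝ, 0 < r → 0 < αb r)
    (hα0 : Tendsto αb atTop (𝓝 0))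
    (hSO : SObm d C (CinfFun d L) Sb αb) {u : Fin d → ℝ}
    (hu : ∀ j, 0 < u j ∧ u j ≤ 1) (s : ℝ) :
    Tendsto (fun r : ℝ =>
        ((C (fun j => u j ^ (1/r)) ^ r) ^ s - CinfFun d L u ^ s) / αb r) atTop
      (𝓝 (s * CinfFun d L u ^ (s-1) * Sb u)) := by
  set A := CinfFun d L u with hAdef
  have hA : 0 < A := cinf_pos L (fun j => (hu j).1)
  set Ar : ℝ → ℝ := fun r => C (fun j => u j ^ (1/r)) ^ r with hArdef
  have h1 : Tendsto (fun r => (Ar r - A) / αb r) atTop (𝓝 (Sb u)) := so_pointwise hSO hu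
  have h2 : Tendsto Ar atTop (𝓝 A) := by
    have h := (h1.mul hα0).add (tendsto_const_nhds (x := A))
    rw [mul_zero, zero_add] at h
    apply h.congr'
    filter_upwards [eventually_gt_atTop (0:ℝ)] with r hr
    field_simp [(hαpos r hr).ne']
    ring
  set G : ℝ → ℝ := Function.update (slope (fun x : ℝ => x ^ s) A) A (s * A ^ (s-1)) with hGdef
  have hGA : ContinuousAt G A := by
    rw [hGdef, continuousAt_update_same]
    exact hasDerivAt_iff_tendsto_slope.mp (Real.hasDerivAt_rpow_const (Or.inl hA.ne'))
  have hid : ∀ x : ℝ, x ^ s - A ^ s = G x * (x - A) := by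
    intro x
    by_cases hx : x = A
    · simp [hx]
    · rw [hGdef, Function.update_of_ne hx, slope_def_field,
        div_mul_cancel₀ _ (sub_ne_zero.mpr hx)]
  have h3 : Tendsto (fun r => G (Ar r)) atTop (𝓝 (s * A ^ (s-1))) := by
    have h := hGA.tendsto.comp h2
    simpa [hGdef, Function.update_self, Function.comp_def] using h
  have h4 := h3.mul h1
  apply h4.congr
  intro r
  rw [← mul_div_assoc, ← hid (Ar r)]

/-- Substituted limit: `(A_r(u)^s − C_∞(u)^s)/α_b(rs) → S_b(u^s)`. -/
lemma subst_limit (hL : IsSTDF d L) (hC : IsCopulaLike d C)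
    (hSO : SObm d C (CinfFun d L) Sb αb) {u : Fin d → ℝ}
    (hu : ∀ j, 0 < u j ∧ u j ≤ 1) {s : ℝ} (hs : 0 < s) :
    Tendsto (fun r : ℝ =>
        ((C (fun j => u j ^ (1/r)) ^ r) ^ s - CinfFun d L u ^ s) / αb (r * s)) atTop
      (𝓝 (Sb (fun j => u j ^ s))) := by
  have hus := pow_mem hu hs
  have h0 := so_pointwise hSO hus
  have hcomp : Tendsto (fun r : ℝ => r * s) atTop atTop :=
    Tendsto.atTop_mul_const hs tendsto_id
  have h1 := h0.comp hcomp
  rw [cinf_pow hL hu hs] at h1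
  apply h1.congr'
  filter_upwards [eventually_C_nonneg hC hu, eventually_gt_atTop (0:ℝ)] with r hCr hr
  simp only [Function.comp]
  congr 2
  have hinner : (fun j => (u j ^ s) ^ (1/(r*s))) = (fun j => u j ^ (1/r)) := by
    funext j
    rw [← Real.rpow_mul (hu j).1.le]
    congr 1
    field_simp
  rw [hinner, Real.rpow_mul hCr]

/-- Ratio limit: if `S_b(u) ≠ 0` then `α_b(r)/α_b(rs) → S_b(u^s)/(s C_∞(u)^{s−1} S_b(u))`. -/
lemma ratio_limit (hL : IsSTDF d L) (hC : IsCopulaLike d C)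
    (hαpos : ∀ r : ℝ, 0 < r → 0 < αb r) (hα0 : Tendsto αb atTop (𝓝 0))
    (hSO : SObm d C (CinfFun d L) Sb αb) {u : Fin d → ℝ}
    (hu : ∀ j, 0 < u j ∧ u j ≤ 1) (hSu : Sb u ≠ 0) {s : ℝ} (hs : 0 < s) :
    Tendsto (fun r : ℝ => αb r / αb (r * s)) atTop
      (𝓝 (Sb (fun j => u j ^ s) / (s * CinfFun d L u ^ (s-1) * Sb u))) := by
  have hA : 0 < CinfFun d L u := cinf_pos L (fun j => (hu j).1)
  have hcne : s * CinfFun d L u ^ (s-1) * Sb u ≠ 0 :=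
    mul_ne_zero (mul_ne_zero hs.ne' (Real.rpow_pos_of_pos hA _).ne') hSu
  have h1 := core_limit hαpos hα0 hSO hu s
  have h2 := subst_limit hL hC hSO hu hs
  have h3 := h2.div h1 hcne
  apply h3.congr'
  have hNne : ∀ᶠ r : ℝ in atTop,
      (C (fun j => u j ^ (1/r)) ^ r) ^ s - CinfFun d L u ^ s ≠ 0 := by
    filter_upwards [h1.eventually_ne hcne] with r hr
    intro h0
    exact hr (by rw [h0, zero_div])
  filter_upwards [hNne, eventually_gt_atTop (0:ℝ)] with r hN hr
  have ha := (hαpos r hr).ne'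
  have hb := (hαpos (r*s) (mul_pos hr hs)).ne'
  simp only [Pi.div_apply]
  field_simp

end S1Aux

open S1Aux

/-- Lemma 2.2 (ii). Under (SO)_b with continuous non-null `Sb`, the auxiliary
function `αb` is regularly varying of some index `ρ_b ≤ 0` and `Sb/C_∞` satisfies the
homogeneity relation `S_b(u^s)/C_∞(u^s) = s^{1−ρ_b}·S_b(u)/C_∞(u)`. -/
theorem statement1 {d : ℕ} (C L Sb : (Fin d → ℝ) → ℝ) (αb : ℝ → ℝ)
    (hL : IsSTDF d L) (hC : IsCopulaLike d C)
    (hDOA : BmDOA d C (CinfFun d L))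
    (hαpos : ∀ r : ℝ, 0 < r → 0 < αb r)
    (hα0 : Filter.Tendsto αb Filter.atTop (nhds 0))
    (hScont : ContinuousOn Sb (Set.Icc (0 : Fin d → ℝ) (fun _ => 1)))
    (hSnonnull : ∃ u : Fin d → ℝ, (∀ j, 0 ≤ u j ∧ u j ≤ 1) ∧ Sb u ≠ 0)
    (hSO : SObm d C (CinfFun d L) Sb αb) :
    ∃ ρb : ℝ, ρb ≤ 0 ∧ RegVary αb ρb ∧
      ∀ s : ℝ, 0 < s → ∀ u : Fin d → ℝ, (∀ j, 0 < u j ∧ u j ≤ 1) →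
        Sb (fun j => u j ^ s) / CinfFun d L (fun j => u j ^ s)
          = s ^ (1 - ρb) * (Sb u / CinfFun d L u) := by
  classical
  obtain ⟨u₁, hu₁, hS1⟩ := hSnonnull
  -- Step 1: find `u₀ ∈ (0,1]^d` with `Sb u₀ ≠ 0`.
  obtain ⟨u₀, hu₀, hS₀⟩ : ∃ u₀ : Fin d → ℝ, (∀ j, 0 < u₀ j ∧ u₀ j ≤ 1) ∧ Sb u₀ ≠ 0 := by
    set v : ℕ → (Fin d → ℝ) := fun n j => max (u₁ j) ((n:ℝ)+1)⁻¹ with hvdef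
    have hvmem : ∀ n, v n ∈ Set.Icc (0 : Fin d → ℝ) (fun _ => 1) := by
      intro n
      refine Set.mem_Icc.mpr ⟨fun j => ?_, fun j => ?_⟩
      · exact le_max_of_le_left (hu₁ j).1
      · refine max_le (hu₁ j).2 ?_
        rw [inv_le_one_iff₀]
        right
        have : (0:ℝ) ≤ (n:ℝ) := Nat.cast_nonneg n
        linarith
    have hvpos : ∀ n j, 0 < v n j := fun n j => lt_max_of_lt_right (by positivity)
    have hvt : Tendsto v atTop (𝓝 u₁) := by
      rw [tendsto_pi_nhds]
      intro j
      have h1 : Tendsto (fun n : ℕ => ((n:ℝ)+1)⁻¹) atTop (𝓝 0) :=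
        tendsto_inv_atTop_zero.comp
          (tendsto_atTop_add_const_right atTop 1 tendsto_natCast_atTop_atTop)
      have h2 := (tendsto_const_nhds (x := u₁ j)).max h1
      rw [max_eq_left (hu₁ j).1] at h2
      exact h2
    have hSbv : Tendsto (fun n => Sb (v n)) atTop (𝓝 (Sb u₁)) := by
      have hcw := hScont u₁ (Set.mem_Icc.mpr ⟨fun j => (hu₁ j).1, fun j => (hu₁ j).2⟩)
      exact hcw.tendsto.comp (tendsto_nhdsWithin_iff.mpr ⟨hvt, Eventually.of_forall hvmem⟩)
    obtain ⟨n, hn⟩ := (hSbv.eventually_ne hS1).exists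
    exact ⟨v n, fun j => ⟨hvpos n j, (Set.mem_Icc.mp (hvmem n)).2 j⟩, hn⟩
  have hA₀ : 0 < CinfFun d L u₀ := cinf_pos L (fun j => (hu₀ j).1)
  have hcne : ∀ s : ℝ, 0 < s → s * CinfFun d L u₀ ^ (s-1) * Sb u₀ ≠ 0 := fun s hs =>
    mul_ne_zero (mul_ne_zero hs.ne' (Real.rpow_pos_of_pos hA₀ _).ne') hS₀
  -- Step 2: `Sb` never vanishes along `s ↦ u₀^s`.
  have hnv : ∀ s : ℝ, 0 < s → Sb (fun j => u₀ j ^ s) ≠ 0 := by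
    intro s hs
    by_contra h0
    have hR := ratio_limit hL hC hαpos hα0 hSO hu₀ hS₀ hs
    rw [h0, zero_div] at hR
    have ht : (0:ℝ) < s⁻¹ := inv_pos.mpr hs
    have hRt := ratio_limit hL hC hαpos hα0 hSO hu₀ hS₀ ht
    have h2 : Tendsto (fun r : ℝ => αb (r * s⁻¹) / αb r) atTop (𝓝 0) := by
      have hcomp : Tendsto (fun r : ℝ => r * s⁻¹) atTop atTop :=
        Tendsto.atTop_mul_const ht tendsto_id
      have h := hR.comp hcomp
      apply h.congr
      intro r
      simp only [Function.comp]
      rw [mul_assoc, inv_mul_cancel₀ hs.ne', mul_one]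
    by_cases hz : Sb (fun j => u₀ j ^ s⁻¹) = 0
    · rw [hz, zero_div] at hRt
      have hprod := h2.mul hRt
      rw [mul_zero] at hprod
      have hone : Tendsto (fun _ : ℝ => (1:ℝ)) atTop (𝓝 0) := by
        apply hprod.congr'
        filter_upwards [eventually_gt_atTop (0:ℝ)] with r hr
        have ha := (hαpos r hr).ne'
        have hb := (hαpos (r * s⁻¹) (mul_pos hr ht)).ne'
        field_simp
        exact div_self (by rw [div_eq_mul_inv]; exact hb)
      exact one_ne_zero (tendsto_nhds_unique hone tendsto_const_nhds).symm
    · have h3 := hRt.inv₀ (div_ne_zero hz (hcne s⁻¹ ht))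
      have h4 : Tendsto (fun r : ℝ => αb (r * s⁻¹) / αb r) atTop
          (𝓝 ((Sb (fun j => u₀ j ^ s⁻¹) /
            (s⁻¹ * CinfFun d L u₀ ^ (s⁻¹-1) * Sb u₀))⁻¹)) := by
        apply h3.congr
        intro r
        rw [inv_div]
      have h5 := tendsto_nhds_unique h2 h4
      exact (inv_ne_zero (div_ne_zero hz (hcne s⁻¹ ht))) h5.symm
  -- Step 3: the limit function `g` of `α_b(rs)/α_b(r)`.
  set g : ℝ → ℝ :=
    fun s => s * CinfFun d L u₀ ^ (s-1) * Sb u₀ / Sb (fun j => u₀ j ^ s) with hgdef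
  have hg : ∀ s : ℝ, 0 < s →
      Tendsto (fun r : ℝ => αb (r * s) / αb r) atTop (𝓝 (g s)) := by
    intro s hs
    have h3 := (ratio_limit hL hC hαpos hα0 hSO hu₀ hS₀ hs).inv₀
      (div_ne_zero (hnv s hs) (hcne s hs))
    rw [inv_div] at h3
    apply h3.congr
    intro r
    rw [inv_div]
  have hgne : ∀ s : ℝ, 0 < s → g s ≠ 0 := fun s hs =>
    div_ne_zero (hcne s hs) (hnv s hs)
  have hgpos : ∀ s : ℝ, 0 < s → 0 < g s := by
    intro s hs
    have hnn : 0 ≤ g s := by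
      apply ge_of_tendsto (hg s hs)
      filter_upwards [eventually_gt_atTop (0:ℝ)] with r hr
      exact div_nonneg (hαpos (r*s) (mul_pos hr hs)).le (hαpos r hr).le
    exact lt_of_le_of_ne hnn (Ne.symm (hgne s hs))
  -- Step 4: multiplicativity of `g`.
  have hgmul : ∀ s t : ℝ, 0 < s → 0 < t → g (s * t) = g s * g t := by
    intro s t hs ht
    have h2 : Tendsto (fun r : ℝ => αb ((r*s)*t) / αb (r*s)) atTop (𝓝 (g t)) :=
      (hg t ht).comp (Tendsto.atTop_mul_const hs tendsto_id)
    have h3 := h2.mul (hg s hs)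
    have h4 : Tendsto (fun r : ℝ => αb (r * (s*t)) / αb r) atTop (𝓝 (g t * g s)) := by
      apply h3.congr'
      filter_upwards [eventually_gt_atTop (0:ℝ)] with r hr
      have ha := (hαpos r hr).ne'
      have hb := (hαpos (r*s) (mul_pos hr hs)).ne'
      rw [← mul_assoc]
      field_simp
    exact (tendsto_nhds_unique (hg (s*t) (mul_pos hs ht)) h4).trans (mul_comm _ _)
  -- Step 5: continuity of `g` on `(0,∞)`.
  have hgc : ∀ x : ℝ, 0 < x → ContinuousAt g x := by
    intro x hx
    have hden : ContinuousAt (fun s : ℝ => Sb (fun j => u₀ j ^ s)) x := by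
      have hφ : Continuous (fun s : ℝ => (fun j => u₀ j ^ s : Fin d → ℝ)) :=
        continuous_pi (fun j => continuous_iff_continuousAt.mpr
          (fun y => Real.continuousAt_const_rpow (ne_of_gt (hu₀ j).1)))
      have hmap : Set.MapsTo (fun s : ℝ => (fun j => u₀ j ^ s : Fin d → ℝ))
          (Set.Ioi 0) (Set.Icc 0 (fun _ => 1)) := by
        intro s hs
        have hps := pow_mem hu₀ (Set.mem_Ioi.mp hs)
        exact Set.mem_Icc.mpr ⟨fun j => (hps j).1.le, fun j => (hps j).2⟩
      have hcw : ContinuousWithinAt (fun s : ℝ => Sb (fun j => u₀ j ^ s)) (Set.Ioi 0) x :=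
        (hScont _ (hmap (Set.mem_Ioi.mpr hx))).comp hφ.continuousWithinAt hmap
      exact hcw.continuousAt (Ioi_mem_nhds hx)
    have hnum : ContinuousAt (fun s : ℝ => s * CinfFun d L u₀ ^ (s-1) * Sb u₀) x := by
      have h1 : ContinuousAt (fun s : ℝ => CinfFun d L u₀ ^ (s-1)) x :=
        (Real.continuousAt_const_rpow (ne_of_gt hA₀)).comp
          (continuousAt_id.sub continuousAt_const)
      exact (continuousAt_id.mul h1).mul continuousAt_const
    rw [hgdef]
    exact hnum.div hden (hnv x hx)
  -- Step 6: Cauchy functional equation gives `g s = s ^ ρ`.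
  have hadd : ∀ x y : ℝ, Real.log (g (Real.exp (x + y)))
      = Real.log (g (Real.exp x)) + Real.log (g (Real.exp y)) := by
    intro x y
    rw [Real.exp_add, hgmul _ _ (Real.exp_pos x) (Real.exp_pos y),
      Real.log_mul (hgne _ (Real.exp_pos x)) (hgne _ (Real.exp_pos y))]
  have hcont : Continuous (fun x : ℝ => Real.log (g (Real.exp x))) := by
    rw [continuous_iff_continuousAt]
    intro x
    have hlg : ContinuousAt (Real.log ∘ g) (Real.exp x) :=
      (Real.continuousAt_log (hgne _ (Real.exp_pos x))).comp (hgc _ (Real.exp_pos x))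
    exact hlg.comp Real.continuous_exp.continuousAt
  set F : ℝ →+ ℝ := AddMonoidHom.mk' (fun x => Real.log (g (Real.exp x))) hadd with hFdef
  have hFc : Continuous F := hcont
  set ρ : ℝ := Real.log (g (Real.exp 1)) with hρdef
  have hlin : ∀ x : ℝ, Real.log (g (Real.exp x)) = x * ρ := by
    intro x
    have h2 : (F.toRealLinearMap hFc) (x • (1:ℝ)) = x • (F.toRealLinearMap hFc) 1 :=
      (F.toRealLinearMap hFc).map_smul x 1
    rw [AddMonoidHom.coe_toRealLinearMap] at h2
    have hFapp : ∀ y : ℝ, F y = Real.log (g (Real.exp y)) := fun y => rfl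
    rw [hFapp, hFapp, smul_eq_mul, smul_eq_mul, mul_one] at h2
    exact h2
  have hgs : ∀ s : ℝ, 0 < s → g s = s ^ ρ := by
    intro s hs
    have h1 := hlin (Real.log s)
    rw [Real.exp_log hs] at h1
    rw [Real.rpow_def_of_pos hs, ← h1, Real.exp_log (hgpos s hs)]
  -- Step 7: regular variation.
  have hreg : RegVary αb ρ := by
    intro x hx
    have h := hg x hx
    rwa [hgs x hx] at h
  -- Step 8: `ρ ≤ 0`.
  have hρle : ρ ≤ 0 := by
    by_contra hρpos
    push_neg at hρpos
    have h2ρ : (1:ℝ) < 2 ^ ρ :=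
      (Real.one_lt_rpow_iff_of_pos (by norm_num)).mpr (Or.inl ⟨by norm_num, hρpos⟩)
    have hev := (hreg 2 (by norm_num)).eventually (eventually_gt_nhds h2ρ)
    rw [eventually_atTop] at hev
    obtain ⟨T, hT⟩ := hev
    set T' := max T 1 with hT'def
    have hT'pos : (0:ℝ) < T' := lt_of_lt_of_le one_pos (le_max_right _ _)
    have hge : ∀ n : ℕ, T' ≤ T' * 2 ^ n := by
      intro n
      nth_rewrite 1 [← mul_one T']
      exact mul_le_mul_of_nonneg_left (one_le_pow₀ (by norm_num)) hT'pos.le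
    have hmono : ∀ n : ℕ, αb T' ≤ αb (T' * 2 ^ n) := by
      intro n
      induction n with
      | zero => simp
      | succ n ih =>
        have harg : T ≤ T' * 2 ^ n := le_trans (le_max_left T 1) (hge n)
        have hr := hT _ harg
        have hposn : 0 < αb (T' * 2 ^ n) := hαpos _ (lt_of_lt_of_le hT'pos (hge n))
        have hlt := (one_lt_div hposn).mp hr
        have heq : T' * 2 ^ (n+1) = (T' * 2 ^ n) * 2 := by ring
        rw [heq]
        exact le_trans ih hlt.le
    have htends : Tendsto (fun n : ℕ => αb (T' * 2 ^ n)) atTop (𝓝 0) :=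
      hα0.comp (Tendsto.const_mul_atTop hT'pos
        (tendsto_pow_atTop_atTop_of_one_lt (by norm_num : (1:ℝ) < 2)))
    have hle0 : αb T' ≤ 0 := ge_of_tendsto htends (Eventually.of_forall hmono)
    exact absurd hle0 (not_le.mpr (hαpos T' hT'pos))
  -- Step 9: the homogeneity relation at every `u ∈ (0,1]^d`.
  refine ⟨ρ, hρle, hreg, ?_⟩
  intro s hs u hu
  have hA : 0 < CinfFun d L u := cinf_pos L (fun j => (hu j).1)
  have hcore := core_limit hαpos hα0 hSO hu s
  have hsub := subst_limit hL hC hSO hu hs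
  have hinv : Tendsto (fun r : ℝ => αb r / αb (r * s)) atTop (𝓝 ((s ^ ρ)⁻¹)) := by
    have h1 := (hg s hs).inv₀ (hgne s hs)
    rw [hgs s hs] at h1
    apply h1.congr
    intro r
    rw [inv_div]
  have hmul := hcore.mul hinv
  have hkey : Sb (fun j => u j ^ s)
      = s * CinfFun d L u ^ (s-1) * Sb u * (s ^ ρ)⁻¹ := by
    apply tendsto_nhds_unique hsub
    apply hmul.congr'
    filter_upwards [eventually_gt_atTop (0:ℝ)] with r hr
    have ha := (hαpos r hr).ne'
    have hb := (hαpos (r*s) (mul_pos hr hs)).ne'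
    field_simp
  rw [cinf_pow hL hu hs, hkey]
  have h1 : CinfFun d L u ^ (s-1) = CinfFun d L u ^ s / CinfFun d L u := by
    rw [Real.rpow_sub hA, Real.rpow_one]
  have h2 : s ^ (1-ρ) = s * (s ^ ρ)⁻¹ := by
    rw [sub_eq_add_neg, Real.rpow_add hs, Real.rpow_one, Real.rpow_neg hs.le]
  rw [h1, h2]
  have hAs : (0:ℝ) < CinfFun d L u ^ s := Real.rpow_pos_of_pos hA s
  have hsρ : (0:ℝ) < s ^ ρ := Real.rpow_pos_of_pos hs ρ
  field_simp
end
end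

section
/- Let C_∞ be an extreme-value copula with Π_j u_j ≤ C_∞(u) ≤ min_j u_j on [0,1]^d, let ρ ≤ 0, and let S : [0,1]^d → ℝ be a bounded function satisfying the homogeneity relation S(u^s)/C_∞(u^s) = s^{1−ρ}·S(u)/C_∞(u) for all s > 0 and u ∈ (0,1]^d. Then, with the finite constant K = e^d · sup{|S(v)| : v ∈ [e^{−1},1]^d}, one has |S(u)| ≤ K · u_∧ · (−log u_∧)^{1+|ρ|} for all u ∈ (0,1]^d, where u_∧ := min(u_1,…,u_d); in particular S(1,…,1) = 0. -/
open Filter Topology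

noncomputable section

/-- the growth bound (2.3): if a bounded `S` satisfies the (SO)_b homogeneity
relation, then `|S(u)| ≤ K·u_∧·(−log u_∧)^{1+|ρ|}` with
`K = e^d·sup{|S(v)| : v ∈ [e^{−1},1]^d}`; in particular `S(1,…,1) = 0`. -/
theorem statement2 {d : ℕ} (hd : 0 < d) (L S : (Fin d → ℝ) → ℝ) (ρ : ℝ)
    (hL : IsSTDF d L) (hρ : ρ ≤ 0)
    (hlow : ∀ u : Fin d → ℝ, (∀ j, 0 ≤ u j ∧ u j ≤ 1) → ∏ j, u j ≤ CinfFun d L u)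
    (hup : ∀ u : Fin d → ℝ, (∀ j, 0 ≤ u j ∧ u j ≤ 1) → ∀ j, CinfFun d L u ≤ u j)
    (hSbdd : ∃ M : ℝ, ∀ u : Fin d → ℝ, (∀ j, 0 ≤ u j ∧ u j ≤ 1) → |S u| ≤ M)
    (hhom : ∀ s : ℝ, 0 < s → ∀ u : Fin d → ℝ, (∀ j, 0 < u j ∧ u j ≤ 1) →
      S (fun j => u j ^ s) / CinfFun d L (fun j => u j ^ s)
        = s ^ (1 - ρ) * (S u / CinfFun d L u))
    (K : ℝ)
    (hK : K = Real.exp d *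
      sSup ((fun v => |S v|) '' Set.Icc (fun _ : Fin d => Real.exp (-1)) (fun _ => 1))) :
    (∀ u : Fin d → ℝ, (∀ j, 0 < u j ∧ u j ≤ 1) →
      |S u| ≤ K * (⨅ j, u j) * (-Real.log (⨅ j, u j)) ^ (1 + |ρ|)) ∧
    S (fun _ => 1) = 0 := by
  -- `L 0 = 0`
  have hL0 : L 0 = 0 := by
    have h := hL.1 2 (by norm_num) 0 (fun j => le_refl 0)
    simp at h
    linarith
  -- `C_∞(1,…,1) = 1`
  have hC1 : CinfFun d L (fun _ => 1) = 1 := by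
    have h0 : (fun j : Fin d => -Real.log ((1:ℝ))) = 0 := by funext j; simp
    rw [CinfFun, if_pos (fun j => one_pos)]
    rw [h0, hL0]
    simp
  have hCpos : ∀ w : Fin d → ℝ, (∀ j, 0 < w j) → 0 < CinfFun d L w := by
    intro w hw
    rw [CinfFun, if_pos hw]
    exact Real.exp_pos _
  -- `S(1,…,1) = 0`
  have hS1 : S (fun _ => 1) = 0 := by
    have h := hhom 2 (by norm_num) (fun _ => 1) (fun j => ⟨one_pos, le_refl 1⟩)
    have h1 : (fun j : Fin d => (1:ℝ) ^ (2:ℝ)) = (fun _ => (1:ℝ)) := by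
      funext j; simp [Real.one_rpow]
    rw [h1, hC1] at h
    simp only [div_one] at h
    have ht : (1:ℝ) < (2:ℝ) ^ (1 - ρ) :=
      (Real.one_lt_rpow_iff_of_pos (by norm_num)).mpr (Or.inl ⟨by norm_num, by linarith⟩)
    have hz : S (fun _ => (1:ℝ)) * (1 - (2:ℝ) ^ (1 - ρ)) = 0 := by linarith [h]
    rcases mul_eq_zero.mp hz with h' | h'
    · exact h'
    · exfalso; linarith
  obtain ⟨M, hM⟩ := hSbdd
  -- supremum over the small cube
  set Msup := sSup ((fun v => |S v|) '' Set.Icc (fun _ : Fin d => Real.exp (-1)) (fun _ => 1))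
    with hMsup
  have hbdd : BddAbove ((fun v => |S v|) '' Set.Icc (fun _ : Fin d => Real.exp (-1)) (fun _ => 1)) := by
    refine ⟨M, ?_⟩
    rintro y ⟨w, hw, rfl⟩
    rw [Set.mem_Icc] at hw
    exact hM w (fun j => ⟨le_trans (Real.exp_pos _).le (hw.1 j), hw.2 j⟩)
  constructor
  · intro u hu
    haveI : Nonempty (Fin d) := ⟨⟨0, hd⟩⟩
    obtain ⟨j0, hj0⟩ := Finite.exists_min u
    set m := ⨅ j, u j with hm
    have hmle : ∀ j, m ≤ u j := fun j => ciInf_le (Set.finite_range u).bddBelow j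
    have hmj0 : m = u j0 := le_antisymm (hmle j0) (le_ciInf hj0)
    have hm0 : 0 < m := hmj0 ▸ (hu j0).1
    have hm1 : m ≤ 1 := hmj0 ▸ (hu j0).2
    by_cases hcase : m = 1
    · have hu1 : u = fun _ => 1 := by
        funext j
        exact le_antisymm (hu j).2 (hcase ▸ hmle j)
      have hr : K * m * (-Real.log m) ^ (1 + |ρ|) = 0 := by
        rw [hcase, Real.log_one, neg_zero, Real.zero_rpow (by positivity)]
        ring
      rw [hu1, hS1, abs_zero, hr]
    · have hmlt : m < 1 := lt_of_le_of_ne hm1 hcase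
      set s := -Real.log m with hsdef
      have hs : 0 < s := by
        have := Real.log_neg hm0 hmlt
        simp only [hsdef]
        linarith
      set v := fun j => u j ^ (1/s : ℝ) with hvdef
      have hv1 : ∀ j, v j ≤ 1 := fun j =>
        Real.rpow_le_one (hu j).1.le (hu j).2 (by positivity)
      have hvlo : ∀ j, Real.exp (-1) ≤ v j := by
        intro j
        simp only [hvdef]
        rw [Real.rpow_def_of_pos (hu j).1]
        apply Real.exp_le_exp.mpr
        have hlog : -s ≤ Real.log (u j) := by
          have h1 : Real.log m ≤ Real.log (u j) := Real.log_le_log hm0 (hmle j)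
          simp only [hsdef]; linarith
        rw [mul_one_div, le_div_iff₀ hs]
        linarith
      have hvpos : ∀ j, 0 < v j := fun j => lt_of_lt_of_le (Real.exp_pos _) (hvlo j)
      have hvs : (fun j => v j ^ s) = u := by
        funext j
        simp only [hvdef]
        rw [← Real.rpow_mul (hu j).1.le, one_div_mul_cancel hs.ne', Real.rpow_one]
      have key := hhom s hs v (fun j => ⟨hvpos j, hv1 j⟩)
      rw [hvs] at key
      have hCu : 0 < CinfFun d L u := hCpos u (fun j => (hu j).1)
      have hCv : 0 < CinfFun d L v := hCpos v hvpos
      set Cu := CinfFun d L u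
      set Cv := CinfFun d L v
      have hSu : S u = s ^ (1 - ρ) * (S v / Cv) * Cu := by
        rw [div_eq_iff hCu.ne'] at key
        exact key
      have hA : 0 < s ^ (1 - ρ) := Real.rpow_pos_of_pos hs _
      have habs : |S u| = s ^ (1 - ρ) * (|S v| / Cv) * Cu := by
        rw [hSu, abs_mul, abs_mul, abs_div, abs_of_pos hCu, abs_of_pos hCv, abs_of_pos hA]
      have hCum : Cu ≤ m := by
        rw [hmj0]
        exact hup u (fun j => ⟨(hu j).1.le, (hu j).2⟩) j0
      have hCvlo : Real.exp (-(d:ℝ)) ≤ Cv := by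
        have hlo := hlow v (fun j => ⟨(hvpos j).le, hv1 j⟩)
        refine le_trans ?_ hlo
        calc Real.exp (-(d:ℝ)) = ∏ _j : Fin d, Real.exp (-1) := by
              rw [Finset.prod_const, Finset.card_univ, Fintype.card_fin,
                ← Real.exp_nat_mul]
              congr 1
              ring
          _ ≤ ∏ j, v j :=
              Finset.prod_le_prod (fun j _ => (Real.exp_pos _).le) (fun j _ => hvlo j)
      have hvmem : v ∈ Set.Icc (fun _ : Fin d => Real.exp (-1)) (fun _ => (1:ℝ)) := by
        rw [Set.mem_Icc]
        exact ⟨fun j => hvlo j, fun j => hv1 j⟩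
      have hSvle : |S v| ≤ Msup := le_csSup hbdd ⟨v, hvmem, rfl⟩
      have hMsup0 : 0 ≤ Msup := le_trans (abs_nonneg _) hSvle
      have h1 : |S v| / Cv ≤ Msup * Real.exp (d:ℝ) := by
        rw [div_le_iff₀ hCv]
        calc |S v| ≤ Msup := hSvle
          _ = Msup * (Real.exp (d:ℝ) * Real.exp (-(d:ℝ))) := by
              rw [← Real.exp_add]; simp
          _ ≤ Msup * (Real.exp (d:ℝ) * Cv) := by
              apply mul_le_mul_of_nonneg_left _ hMsup0
              exact mul_le_mul_of_nonneg_left hCvlo (Real.exp_pos _).le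
          _ = Msup * Real.exp (d:ℝ) * Cv := by ring
      have hgoal : |S u| ≤ K * m * s ^ (1 - ρ) := by
        calc |S u| = s ^ (1 - ρ) * (|S v| / Cv) * Cu := habs
          _ ≤ s ^ (1 - ρ) * (Msup * Real.exp (d:ℝ)) * m := by
              apply mul_le_mul (mul_le_mul_of_nonneg_left h1 hA.le) hCum hCu.le
              exact mul_nonneg hA.le (mul_nonneg hMsup0 (Real.exp_pos _).le)
          _ = K * m * s ^ (1 - ρ) := by rw [hK]; ring
      have hexp : 1 + |ρ| = 1 - ρ := by rw [abs_of_nonpos hρ]; ring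
      rw [hexp]
      exact hgoal
  · exact hS1
end
end

section
/- Let C be a copula and C_∞ an extreme-value copula with Π_j u_j ≤ C_∞(u) and max-stability C_∞(u^{1/s})^s = C_∞(u). Suppose Condition (SO)_{b,d} holds: there are α_{b,d} : ℕ → (0,∞) with α_{b,d}(⌊r⌋) → 0 as r → ∞ and a non-null continuous S_{b,d} : [0,1]^d → ℝ such that (C(u^{1/⌊r⌋})^{⌊r⌋} − C_∞(u))/α_{b,d}(⌊r⌋) → S_{b,d}(u) as r → ∞, uniformly on [δ,1]^d for every δ ∈ (0,1). Then Condition (SO)_b holds with α_b(r) := α_{b,d}(⌊r⌋) and S_b := S_{b,d}; that is, (C(u^{1/r})^r − C_∞(u))/α_{b,d}(⌊r⌋) → S_{b,d}(u) as the real parameter r → ∞, uniformly on [δ,1]^d for every δ ∈ (0,1). -/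
open Filter Topology

noncomputable section

lemma one_sub_rpow_le {u r : ℝ} (hu : 0 < u) (hr : 0 < r) :
    1 - u ^ (1/r) ≤ (-Real.log u) / r := by
  have h := Real.add_one_le_exp (Real.log u * (1/r))
  rw [Real.rpow_def_of_pos hu]
  have hx : Real.log u * (1/r) = -((-Real.log u)/r) := by ring
  linarith [h]

lemma rpow_mvt {a b p : ℝ} (hb : 0 < b) (hba : b < a) (hp : 1 ≤ p) :
    ∃ ξ, b < ξ ∧ ξ < a ∧ a ^ p - b ^ p = p * ξ ^ (p-1) * (a - b) := by
  obtain ⟨ξ, hξ, heq⟩ := exists_hasDerivAt_eq_slope (fun x => x ^ p)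
    (fun x => p * x ^ (p-1)) hba
    (fun x _ => (Real.hasDerivAt_rpow_const (p := p) (Or.inr hp)).continuousAt.continuousWithinAt)
    (fun x _ => Real.hasDerivAt_rpow_const (Or.inr hp))
  refine ⟨ξ, hξ.1, hξ.2, ?_⟩
  rw [eq_div_iff (by linarith : a - b ≠ 0)] at heq
  linarith [heq]

lemma key_bound_aux {c a b p : ℝ} (hc : 0 < c) (hc1 : c ≤ 1) (_hca : c ≤ a) (ha1 : a ≤ 1)
    (hcb : c ≤ b) (_hb1 : b ≤ 1) (hp : 1 ≤ p) (hba : b ≤ a) :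
    |a ^ p - b ^ p - (a - b)| ≤ (p - 1) * (1 - Real.log c) * |a - b| := by
  have hlogc : Real.log c ≤ 0 := Real.log_nonpos hc.le hc1
  rcases eq_or_lt_of_le hba with rfl | hba'
  · simp
  · obtain ⟨ξ, hξ1, hξ2, heq⟩ := rpow_mvt (lt_of_lt_of_le hc hcb) hba' hp
    have hξpos : 0 < ξ := lt_trans (lt_of_lt_of_le hc hcb) hξ1
    have hξ1' : ξ ≤ 1 := le_trans hξ2.le ha1
    have hξc : c ≤ ξ := le_trans hcb hξ1.le
    have hub : ξ ^ (p-1) ≤ 1 := Real.rpow_le_one hξpos.le hξ1' (by linarith)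
    have hlb : 1 + (p-1) * Real.log ξ ≤ ξ ^ (p-1) := by
      rw [Real.rpow_def_of_pos hξpos]
      have := Real.add_one_le_exp (Real.log ξ * (p-1))
      linarith
    have hlogξ : Real.log c ≤ Real.log ξ := Real.log_le_log hc hξc
    have hbound : |p * ξ ^ (p-1) - 1| ≤ (p-1) * (1 - Real.log c) := by
      rw [abs_le]
      have hpξnn : 0 ≤ ξ ^ (p-1) := Real.rpow_nonneg hξpos.le _
      constructor
      · -- 1 - p ξ^(p-1) ≤ (p-1)(1 - log c)
        nlinarith [hlb, hlogξ]
      · nlinarith [hub]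
    have : a ^ p - b ^ p - (a - b) = (p * ξ ^ (p-1) - 1) * (a - b) := by
      rw [heq]; ring
    rw [this, abs_mul]
    exact mul_le_mul_of_nonneg_right hbound (abs_nonneg _)

lemma key_bound {c a b p : ℝ} (hc : 0 < c) (hc1 : c ≤ 1) (hca : c ≤ a) (ha1 : a ≤ 1)
    (hcb : c ≤ b) (hb1 : b ≤ 1) (hp : 1 ≤ p) :
    |a ^ p - b ^ p - (a - b)| ≤ (p - 1) * (1 - Real.log c) * |a - b| := by
  rcases le_total b a with h | h
  · exact key_bound_aux hc hc1 hca ha1 hcb hb1 hp h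
  · have := key_bound_aux hc hc1 hcb hb1 hca ha1 hp h
    have e1 : |a ^ p - b ^ p - (a - b)| = |b ^ p - a ^ p - (b - a)| := by
      rw [← abs_neg]; congr 1; ring
    have e2 : |a - b| = |b - a| := abs_sub_comm a b
    rw [e1, e2]; exact this

lemma cinf_maxstab {d : ℕ} {L : (Fin d → ℝ) → ℝ} (hL : IsSTDF d L)
    {u : Fin d → ℝ} (hu : ∀ j, 0 < u j ∧ u j ≤ 1) {s : ℝ} (hs : 0 < s) :
    CinfFun d L (fun j => u j ^ s) = CinfFun d L u ^ s := by
  have h1 : ∀ j, 0 < u j ^ s := fun j => Real.rpow_pos_of_pos (hu j).1 s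
  unfold CinfFun
  rw [if_pos h1, if_pos (fun j => (hu j).1)]
  have hx : ∀ j, 0 ≤ -Real.log (u j) :=
    fun j => neg_nonneg.2 (Real.log_nonpos (hu j).1.le (hu j).2)
  have hlog : (fun j => -Real.log (u j ^ s)) = s • (fun j => -Real.log (u j)) := by
    funext j
    simp only [Real.log_rpow (hu j).1, Pi.smul_apply, smul_eq_mul]
    ring
  rw [hlog, hL.1 s hs _ hx, Real.rpow_def_of_pos (Real.exp_pos _), Real.log_exp]
  congr 1; ring

lemma cinf_pos {d : ℕ} {L : (Fin d → ℝ) → ℝ} {u : Fin d → ℝ}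
    (hu : ∀ j, 0 < u j) : 0 < CinfFun d L u := by
  unfold CinfFun; rw [if_pos hu]; exact Real.exp_pos _

lemma cinf_lb {d : ℕ} {L : (Fin d → ℝ) → ℝ} (hL : IsSTDF d L) {u : Fin d → ℝ}
    (hu : ∀ j, 0 < u j ∧ u j ≤ 1) :
    (∏ j, u j) ≤ CinfFun d L u := by
  unfold CinfFun
  rw [if_pos (fun j => (hu j).1)]
  have hx : ∀ j, 0 ≤ -Real.log (u j) :=
    fun j => neg_nonneg.2 (Real.log_nonpos (hu j).1.le (hu j).2)
  have hLs := (hL.2.2.2 _ hx).2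
  have e1 : (∏ j, u j) = Real.exp (∑ j, Real.log (u j)) := by
    rw [Real.exp_sum]
    exact Finset.prod_congr rfl (fun j _ => (Real.exp_log (hu j).1).symm)
  rw [e1]
  apply Real.exp_le_exp.2
  have : ∑ j, -Real.log (u j) = -∑ j, Real.log (u j) := by
    rw [Finset.sum_neg_distrib]
  rw [this] at hLs
  linarith

lemma cinf_ub {d : ℕ} {L : (Fin d → ℝ) → ℝ} (hL : IsSTDF d L) (hd : 0 < d) {u : Fin d → ℝ}
    (hu : ∀ j, 0 < u j ∧ u j ≤ 1) :
    CinfFun d L u ≤ 1 := by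
  unfold CinfFun
  rw [if_pos (fun j => (hu j).1)]
  have hx : ∀ j, 0 ≤ -Real.log (u j) :=
    fun j => neg_nonneg.2 (Real.log_nonpos (hu j).1.le (hu j).2)
  have hLlb := (hL.2.2.2 _ hx).1 ⟨0, hd⟩
  have := hx ⟨0, hd⟩
  calc Real.exp _ ≤ Real.exp 0 := Real.exp_le_exp.2 (by linarith)
    _ = 1 := Real.exp_zero

set_option maxHeartbeats 1000000 in
/-- Lemma 2.3. Condition (SO)_{b,d} (along integer block sizes `⌊r⌋`) implies
Condition (SO)_b (along real `r`) with `α_b(r) = α_{b,d}(⌊r⌋)` and `S_b = S_{b,d}`. -/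
theorem statement3 {d : ℕ} (C L Sbd : (Fin d → ℝ) → ℝ) (αbd : ℕ → ℝ)
    (hL : IsSTDF d L) (hC : IsCopulaLike d C)
    (hαpos : ∀ n : ℕ, 0 < αbd n)
    (hα0 : Filter.Tendsto (fun r : ℝ => αbd ⌊r⌋₊) Filter.atTop (nhds 0))
    (hScont : ContinuousOn Sbd (Set.Icc (0 : Fin d → ℝ) (fun _ => 1)))
    (hSnonnull : ∃ u : Fin d → ℝ, (∀ j, 0 ≤ u j ∧ u j ≤ 1) ∧ Sbd u ≠ 0)
    (hSO : ∀ δ : ℝ, 0 < δ → δ < 1 → TendstoUniformlyOn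
      (fun (r : ℝ) (u : Fin d → ℝ) =>
        (C (fun j => u j ^ (1 / (⌊r⌋₊ : ℝ))) ^ (⌊r⌋₊ : ℝ) - CinfFun d L u) / αbd ⌊r⌋₊)
      Sbd Filter.atTop (Set.Icc (fun _ : Fin d => δ) (fun _ => 1))) :
    ∀ δ : ℝ, 0 < δ → δ < 1 → TendstoUniformlyOn
      (fun (r : ℝ) (u : Fin d → ℝ) =>
        (C (fun j => u j ^ (1 / r)) ^ r - CinfFun d L u) / αbd ⌊r⌋₊)
      Sbd Filter.atTop (Set.Icc (fun _ : Fin d => δ) (fun _ => 1)) := by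
  rcases Nat.eq_zero_or_pos d with hd0 | hd
  · subst hd0
    intro δ hδ hδ1
    have heq : ∀ (x : ℝ) (u : Fin 0 → ℝ), C (fun j => u j ^ x) = 1 := by
      intro x u
      rw [← hC.1]; congr 1; funext j; exact Fin.elim0 j
    apply (hSO δ hδ hδ1).congr
    filter_upwards with r u _
    simp only [heq, Real.one_rpow]
  · intro δ hδ hδ1
    rw [Metric.tendstoUniformlyOn_iff]
    intro ε hε
    have hlogδ : 0 < -Real.log δ := by linarith [Real.log_neg hδ hδ1]
    set c₀ : ℝ := δ ^ d / 2 with hc₀def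
    have hc₀pos : 0 < c₀ := by positivity
    have hδd1 : δ ^ d ≤ 1 := pow_le_one₀ hδ.le hδ1.le
    have hc₀1 : c₀ ≤ 1 := by rw [hc₀def]; linarith
    set K : ℝ := 1 - Real.log c₀ with hKdef
    have hKpos : 0 < K := by
      have := Real.log_nonpos hc₀pos.le hc₀1
      rw [hKdef]; linarith
    have hK1 : 1 ≤ K := by
      have := Real.log_nonpos hc₀pos.le hc₀1
      rw [hKdef]; linarith
    obtain ⟨M0, hM0⟩ := isCompact_Icc.exists_bound_of_continuousOn hScont
    set M : ℝ := max M0 1 with hMdef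
    have hM1 : (1:ℝ) ≤ M := le_max_right _ _
    have hM : ∀ v ∈ Set.Icc (0 : Fin d → ℝ) (fun _ => 1), |Sbd v| ≤ M :=
      fun v hv => le_trans (hM0 v hv) (le_max_left _ _)
    have hUC := isCompact_Icc.uniformContinuousOn_of_continuous hScont
    rw [Metric.uniformContinuousOn_iff] at hUC
    obtain ⟨η, hηpos, hη⟩ := hUC (ε/4) (by positivity)
    have hmtend : Tendsto (fun r : ℝ => ((⌊r⌋₊ : ℕ) : ℝ)) atTop atTop :=
      tendsto_natCast_atTop_atTop.comp tendsto_nat_floor_atTop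
    have hinv : Tendsto (fun r : ℝ => ((⌊r⌋₊ : ℝ))⁻¹) atTop (𝓝 0) :=
      hmtend.inv_tendsto_atTop
    have E1 := (Metric.tendstoUniformlyOn_iff.1 (hSO δ hδ hδ1)) (min (ε/4) 1)
      (lt_min (by positivity) one_pos)
    have E2 : ∀ᶠ r : ℝ in atTop, αbd ⌊r⌋₊ < c₀ / (M + 1) :=
      hα0.eventually (gt_mem_nhds (div_pos hc₀pos (by linarith)))
    have E3 : ∀ᶠ r : ℝ in atTop, ((⌊r⌋₊ : ℝ))⁻¹ < ε / (4 * K * (M + 1)) :=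
      hinv.eventually (gt_mem_nhds (div_pos hε (mul_pos (mul_pos (by norm_num : (0:ℝ) < 4) hKpos) (by linarith : (0:ℝ) < M+1))))
    have E4 : ∀ᶠ r : ℝ in atTop, Real.exp ((-Real.log δ) * ((⌊r⌋₊ : ℝ))⁻¹) - 1 < η := by
      have h0 : Tendsto (fun r : ℝ => (-Real.log δ) * ((⌊r⌋₊ : ℝ))⁻¹) atTop (𝓝 0) := by
        have := hinv.const_mul (-Real.log δ)
        rwa [mul_zero] at this
      have h := ((Real.continuous_exp.tendsto 0).comp h0).sub_const 1
      simp only [Function.comp_def, Real.exp_zero, sub_self] at h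
      exact h.eventually (gt_mem_nhds hηpos)
    have E5 : ∀ᶠ r : ℝ in atTop, max 1 (2*(d:ℝ)*(1 - Real.log δ)) ≤ r := eventually_ge_atTop _
    filter_upwards [E1, E2, E3, E4, E5] with r h1 h2 h3 h4 h5
    have hr1 : (1:ℝ) ≤ r := le_trans (le_max_left _ _) h5
    have hr0 : (0:ℝ) < r := lt_of_lt_of_le one_pos hr1
    have hm1 : 1 ≤ ⌊r⌋₊ := Nat.le_floor (by exact_mod_cast hr1)
    have hmler : ((⌊r⌋₊ : ℕ) : ℝ) ≤ r := Nat.floor_le hr0.le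
    have hrm1 : r < ((⌊r⌋₊ : ℕ) : ℝ) + 1 := Nat.lt_floor_add_one r
    set m : ℕ := ⌊r⌋₊ with hmdef
    have hmpos0 : 0 < m := hm1
    have hmpos : (0:ℝ) < (m:ℝ) := by exact_mod_cast hmpos0
    have hα : 0 < αbd m := hαpos m
    have hmne : ((m:ℕ):ℝ) ≠ 0 := ne_of_gt hmpos
    have hrne : r ≠ 0 := ne_of_gt hr0
    intro u hu
    have huj : ∀ j, δ ≤ u j ∧ u j ≤ 1 := fun j => ⟨hu.1 j, hu.2 j⟩
    have huj0 : ∀ j, 0 < u j := fun j => lt_of_lt_of_le hδ (huj j).1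
    set s : ℝ := (m:ℝ) / r with hsdef
    have hs0 : 0 < s := div_pos hmpos hr0
    have hs1 : s ≤ 1 := by rw [hsdef, div_le_one hr0]; exact hmler
    set w : Fin d → ℝ := fun j => u j ^ s with hwdef
    have hwj : ∀ j, δ ≤ w j ∧ w j ≤ 1 := by
      intro j
      constructor
      · calc δ ≤ u j := (huj j).1
          _ = u j ^ (1:ℝ) := (Real.rpow_one _).symm
          _ ≤ u j ^ s := Real.rpow_le_rpow_of_exponent_ge (huj0 j) (huj j).2 hs1
      · exact Real.rpow_le_one (huj0 j).le (huj j).2 hs0.le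
    have hwj0 : ∀ j, 0 < w j := fun j => lt_of_lt_of_le hδ (hwj j).1
    have hwmem : w ∈ Set.Icc (fun _ : Fin d => δ) (fun _ : Fin d => 1) :=
      Set.mem_Icc.2 ⟨fun j => (hwj j).1, fun j => (hwj j).2⟩
    have h1w := h1 w hwmem
    have hfun : (fun j => w j ^ (1/(m:ℝ))) = (fun j => u j ^ (1/r)) := by
      funext j
      rw [hwdef]
      rw [← Real.rpow_mul (huj0 j).le]
      congr 1
      rw [hsdef]
      field_simp [hmne, hrne]
      try ring
    rw [hfun] at h1w
    set c : ℝ := C (fun j => u j ^ (1/r)) with hcdef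
    set a : ℝ := c ^ ((m:ℕ) : ℝ) with hadef
    set b : ℝ := CinfFun d L w with hbdef
    set p : ℝ := r / (m:ℝ) with hpdef
    -- bounds on c
    have hvj : ∀ j, 0 ≤ u j ^ (1/r) ∧ u j ^ (1/r) ≤ 1 := fun j =>
      ⟨Real.rpow_nonneg (huj0 j).le _,
       Real.rpow_le_one (huj0 j).le (huj j).2 (by positivity)⟩
    have hchalf : 1/2 ≤ c := by
      have hlip := hC.2.2 (fun j => u j ^ (1/r)) (fun _ => 1) hvj
        (fun _ => ⟨zero_le_one, le_refl 1⟩)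
      rw [hC.1] at hlip
      have hsum : ∑ j, |u j ^ (1/r) - 1| ≤ (d:ℝ) * ((-Real.log δ)/r) := by
        calc ∑ j, |u j ^ (1/r) - 1| ≤ ∑ _j : Fin d, (-Real.log δ)/r := by
              apply Finset.sum_le_sum
              intro j _
              rw [abs_of_nonpos (by linarith [(hvj j).2])]
              have h1' := one_sub_rpow_le (huj0 j) hr0
              have h2' : -Real.log (u j) ≤ -Real.log δ := by
                have := Real.log_le_log hδ (huj j).1
                linarith
              have h3' : (-Real.log (u j))/r ≤ (-Real.log δ)/r := by gcongr
              linarith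
          _ = (d:ℝ) * ((-Real.log δ)/r) := by
              rw [Finset.sum_const, Finset.card_univ, Fintype.card_fin, nsmul_eq_mul]
      have hhalf : (d:ℝ) * ((-Real.log δ)/r) ≤ 1/2 := by
        have h5' : 2*(d:ℝ)*(1 - Real.log δ) ≤ r := le_trans (le_max_right _ _) h5
        have hd1 : (1:ℝ) ≤ (d:ℝ) := by exact_mod_cast hd
        rw [mul_div_assoc', div_le_iff₀ hr0]
        linarith [hd1, hlogδ, h5']
      have habs := abs_le.1 (le_trans hlip (le_trans hsum hhalf))
      linarith [habs.1]
    have hc0 : 0 < c := lt_of_lt_of_le (by norm_num) hchalf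
    have hc1 : c ≤ 1 := le_trans (hC.2.1 _ hvj ⟨0, hd⟩) (hvj ⟨0, hd⟩).2
    -- bounds on b
    have hb_lb : δ ^ d ≤ b := by
      calc δ ^ d = ∏ _j : Fin d, δ := by
            rw [Finset.prod_const, Finset.card_univ, Fintype.card_fin]
        _ ≤ ∏ j, w j := Finset.prod_le_prod (fun _ _ => hδ.le) (fun j _ => (hwj j).1)
        _ ≤ b := cinf_lb hL (fun j => ⟨hwj0 j, (hwj j).2⟩)
    have hb1 : b ≤ 1 := cinf_ub hL hd (fun j => ⟨hwj0 j, (hwj j).2⟩)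
    have hc₀b : c₀ ≤ b := by
      rw [hc₀def]; linarith [pow_nonneg hδ.le d]
    -- h1w in abs form
    have h1w' : |Sbd w - (a - b)/αbd m| < min (ε/4) 1 := by
      rw [← Real.dist_eq]; exact h1w
    have hwmem01 : w ∈ Set.Icc (0 : Fin d → ℝ) (fun _ => 1) :=
      Set.mem_Icc.2 ⟨fun j => (hwj0 j).le, fun j => (hwj j).2⟩
    have humem01 : u ∈ Set.Icc (0 : Fin d → ℝ) (fun _ => 1) :=
      Set.mem_Icc.2 ⟨fun j => (huj0 j).le, fun j => (huj j).2⟩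
    have hSwb : |Sbd w| ≤ M := hM w hwmem01
    have habs : |a - b| ≤ αbd m * (M + 1) := by
      have hq1 : |(a-b)/αbd m - Sbd w| < 1 := by
        rw [abs_sub_comm]; exact lt_of_lt_of_le h1w' (min_le_right _ _)
      have hq : |(a-b)/αbd m| ≤ M + 1 := by
        calc |(a-b)/αbd m| = |((a-b)/αbd m - Sbd w) + Sbd w| := by ring_nf
          _ ≤ |(a-b)/αbd m - Sbd w| + |Sbd w| := abs_add_le _ _
          _ ≤ M + 1 := by linarith
      rw [abs_div, abs_of_pos hα, div_le_iff₀ hα] at hq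
      linarith
    have hαsmall : αbd m * (M+1) < c₀ := (lt_div_iff₀ (by linarith : (0:ℝ) < M+1)).1 h2
    have ha_lb : c₀ ≤ a := by
      have hba : b - a ≤ |a - b| := by rw [abs_sub_comm]; exact le_abs_self _
      have hδd : δ^d = 2 * c₀ := by rw [hc₀def]; ring
      linarith
    have ha1 : a ≤ 1 := Real.rpow_le_one hc0.le hc1 (Nat.cast_nonneg m)
    -- p facts
    have hp1 : 1 ≤ p := by rw [hpdef, le_div_iff₀ hmpos]; linarith
    have hpm : p - 1 ≤ ((m:ℝ))⁻¹ := by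
      have hpe : p - 1 = (r - (m:ℝ))/(m:ℝ) := by rw [hpdef]; field_simp [hmne, hrne]; try ring
      rw [hpe, inv_eq_one_div]
      gcongr
      linarith
    -- identities
    have hgoal_rw : c ^ r = a ^ p := by
      rw [hadef, ← Real.rpow_mul hc0.le]
      congr 1
      rw [hpdef]
      field_simp [hmne, hrne]
      try ring
    have hb_rw : b ^ p = CinfFun d L u := by
      have hms := cinf_maxstab hL (u := u) (fun j => ⟨huj0 j, (huj j).2⟩) hs0
      have h0 : 0 < CinfFun d L u := cinf_pos huj0
      rw [hbdef, hwdef, hms, ← Real.rpow_mul h0.le]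
      have hsp : s * p = 1 := by rw [hsdef, hpdef]; field_simp [hmne, hrne]; try ring
      rw [hsp, Real.rpow_one]
    -- key estimate
    have hkey := key_bound hc₀pos hc₀1 ha_lb ha1 hc₀b hb1 hp1
    have ht3 : |a ^ p - b ^ p - (a - b)| / αbd m < ε/4 := by
      have hbd : (p-1) * K * |a-b| ≤ ((m:ℝ))⁻¹ * K * (αbd m * (M+1)) := by
        have h0pm : (0:ℝ) ≤ p - 1 := by linarith
        have h0ab : (0:ℝ) ≤ |a-b| := abs_nonneg _
        gcongr
      have hlast : ((m:ℝ))⁻¹ * K * (αbd m * (M+1)) / αbd m = ((m:ℝ))⁻¹ * (K * (M+1)) := by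
        rw [mul_div_assoc, mul_div_cancel_left₀ _ hα.ne', mul_assoc]
      have hfin : ((m:ℝ))⁻¹ * (K*(M+1)) < ε/4 := by
        have hKM : (0:ℝ) < 4*K*(M+1) := mul_pos (mul_pos (by norm_num) hKpos) (by linarith)
        have h3' := (lt_div_iff₀ hKM).1 h3
        have he : ((m:ℝ))⁻¹ * (4*K*(M+1)) = 4 * (((m:ℝ))⁻¹ * (K*(M+1))) := by ring
        linarith
      calc |a^p - b^p - (a-b)|/αbd m ≤ ((p-1)*K*|a-b|)/αbd m := by gcongr
        _ ≤ (((m:ℝ))⁻¹ * K * (αbd m * (M+1)))/αbd m := by gcongr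
        _ = ((m:ℝ))⁻¹ * (K*(M+1)) := hlast
        _ < ε/4 := hfin
    -- closeness of w to u
    have hdistuw : dist u w < η := by
      rw [dist_pi_lt_iff hηpos]
      intro j
      have e1 : w j = u j * u j ^ (s - 1) := by
        show u j ^ s = u j * u j ^ (s - 1)
        rw [show s = 1 + (s-1) by ring, Real.rpow_add (huj0 j), Real.rpow_one]
        ring_nf
      have e2 : u j ^ (s-1) ≤ δ ^ (s-1) :=
        Real.rpow_le_rpow_of_nonpos hδ (huj j).1 (by linarith)
      have e3 : (1:ℝ) ≤ u j ^ (s-1) := by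
        have h := Real.rpow_le_rpow_of_exponent_ge (y := 0) (z := s-1) (huj0 j) (huj j).2
          (by linarith)
        rwa [Real.rpow_zero] at h
      have hwge : u j ≤ w j := by
        calc u j = u j * 1 := (mul_one _).symm
          _ ≤ u j * u j ^ (s-1) := mul_le_mul_of_nonneg_left e3 (huj0 j).le
          _ = w j := e1.symm
      have e4 : w j - u j ≤ δ ^ (s-1) - 1 := by
        have t2 : u j * (u j ^ (s-1) - 1) ≤ 1 * (u j ^ (s-1) - 1) :=
          mul_le_mul_of_nonneg_right (huj j).2 (by linarith)
        have t3 : w j - u j = u j * (u j ^ (s-1) - 1) := by rw [e1]; ring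
        linarith [e2, t2, t3]
      have e5 : δ ^ (s-1) ≤ Real.exp ((-Real.log δ) * ((m:ℝ))⁻¹) := by
        rw [Real.rpow_def_of_pos hδ]
        apply Real.exp_le_exp.2
        have h1s : 1 - s ≤ ((m:ℝ))⁻¹ := by
          have hse : 1 - s = (r - (m:ℝ))/r := by rw [hsdef]; field_simp [hmne, hrne]; try ring
          rw [hse, inv_eq_one_div]
          calc (r - (m:ℝ))/r ≤ 1/r := by gcongr; linarith
            _ ≤ 1/(m:ℝ) := by gcongr
        have hmm := mul_le_mul_of_nonneg_left h1s hlogδ.le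
        linarith [hmm]
      rw [Real.dist_eq, abs_of_nonpos (by linarith : u j - w j ≤ 0)]
      linarith
    have ht1 : dist (Sbd u) (Sbd w) < ε/4 := hη u humem01 w hwmem01 hdistuw
    have ht1' : |Sbd u - Sbd w| < ε/4 := by rw [← Real.dist_eq]; exact ht1
    have ht2 : |Sbd w - (a-b)/αbd m| < ε/4 := lt_of_lt_of_le h1w' (min_le_left _ _)
    -- final assembly
    rw [Real.dist_eq, hgoal_rw, ← hb_rw]
    have hdecomp : Sbd u - (a ^ p - b ^ p)/αbd m =
        (Sbd u - Sbd w) + (Sbd w - (a-b)/αbd m) + (-((a^p - b^p - (a-b))/αbd m)) := by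
      field_simp [hmne, hrne]
      ring
    rw [hdecomp]
    have habs3 : |(-((a ^ p - b ^ p - (a - b))/αbd m))| = |a^p - b^p - (a-b)|/αbd m := by
      rw [abs_neg, abs_div, abs_of_pos hα]
    have hb1' := abs_add_le ((Sbd u - Sbd w) + (Sbd w - (a-b)/αbd m))
      (-((a^p - b^p - (a-b))/αbd m))
    have hb2' := abs_add_le (Sbd u - Sbd w) (Sbd w - (a-b)/αbd m)
    rw [habs3] at hb1'
    linarith
end
end

section
/- Let C be a copula lying in the copula domain of attraction of the extreme-value copula C_∞ associated with the stable tail dependence function L, let δ ∈ (0,1), let α : (0,∞) → (0,∞) with α(r) → 0 as r → ∞, and let S : [δ,1]^d → ℝ be continuous. Then (C(u^{1/r})^r − C_∞(u))/α(r) → S(u) as r → ∞ uniformly on [δ,1]^d if and only if (r·log C(u^{1/r}) − log C_∞(u))/α(r) → S(u)/C_∞(u) as r → ∞ uniformly on [δ,1]^d. -/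
open Filter Topology

noncomputable section

private lemma logTaylor' {a b c : ℝ} (hc : 0 < c) (ha : c ≤ a) (hb : c ≤ b) :
    |Real.log a - Real.log b - (a - b) / b| ≤ (a - b) ^ 2 / c ^ 2 := by
  have ha0 : 0 < a := hc.trans_le ha
  have hb0 : 0 < b := hc.trans_le hb
  have L1 : Real.log a - Real.log b ≤ (a - b) / b := by
    have h := Real.log_le_sub_one_of_pos (div_pos ha0 hb0)
    rw [Real.log_div ha0.ne' hb0.ne'] at h
    have e : a / b - 1 = (a - b) / b := by field_simp
    linarith [e ▸ h]
  have L2 : (a - b) / a ≤ Real.log a - Real.log b := by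
    have h := Real.log_le_sub_one_of_pos (div_pos hb0 ha0)
    rw [Real.log_div hb0.ne' ha0.ne'] at h
    have e : b / a - 1 = -((a - b) / a) := by field_simp; ring
    linarith [e ▸ h]
  rw [abs_le]
  constructor
  · have h1 : (a - b) / a - (a - b) / b = -((a - b) ^ 2 / (a * b)) := by
      field_simp; ring
    have h2 : (a - b) ^ 2 / (a * b) ≤ (a - b) ^ 2 / c ^ 2 := by
      rw [div_le_div_iff₀ (by positivity) (by positivity)]
      nlinarith [sq_nonneg (a - b), mul_le_mul ha hb hc.le ha0.le]
    linarith
  · have : (0:ℝ) ≤ (a - b) ^ 2 / c ^ 2 := by positivity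
    linarith

private lemma tuo_congr_iff' {X : Type*} {F F' : ℝ → X → ℝ} {h : X → ℝ} {s : Set X}
    (he : ∀ᶠ r in atTop, Set.EqOn (F r) (F' r) s) :
    TendstoUniformlyOn F h atTop s ↔ TendstoUniformlyOn F' h atTop s :=
  ⟨fun H => H.congr he, fun H => H.congr (he.mono fun _ hr => hr.symm)⟩

set_option maxHeartbeats 1000000 in
private lemma aux_forward' {X : Type*} (s : Set X) (f : ℝ → X → ℝ) (g S : X → ℝ) (α : ℝ → ℝ)
    (m B : ℝ) (hm : 0 < m) (hB0 : 0 ≤ B)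
    (hg1 : ∀ u ∈ s, m ≤ g u)
    (hS : ∀ u ∈ s, |S u| ≤ B)
    (hα : ∀ᶠ r in atTop, 0 < α r)
    (hα0 : Tendsto α atTop (nhds 0))
    (h : TendstoUniformlyOn (fun r u => (f r u - g u) / α r) S atTop s) :
    TendstoUniformlyOn (fun r u => (Real.log (f r u) - Real.log (g u)) / α r)
      (fun u => S u / g u) atTop s := by
  rw [Metric.tendstoUniformlyOn_iff] at h ⊢
  intro ε hε
  have hε1 : (0:ℝ) < min 1 (ε * m / 2) := by positivity
  have h1 := h _ hε1
  have hKpos : (0:ℝ) < min (m / (2 * (B + 1))) (ε * (m / 2) ^ 2 / (2 * (B + 1) ^ 2)) := by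
    positivity
  have hαsmall := hα0.eventually_lt_const hKpos
  filter_upwards [h1, hα, hαsmall] with r h1r hαr hsm u hu
  have hb_m : m ≤ g u := hg1 u hu
  have hb0 : 0 < g u := hm.trans_le hb_m
  set a := f r u with ha_def
  set b := g u with hb_def
  have hd1 : |(a - b) / α r - S u| < min 1 (ε * m / 2) := by
    have h' := h1r u hu
    rw [Real.dist_eq, abs_sub_comm] at h'
    exact h'
  have hSB : |S u| ≤ B := hS u hu
  have hq : |(a - b) / α r| < B + 1 := by
    have h1' : |(a - b) / α r - S u| < 1 := lt_of_lt_of_le hd1 (min_le_left _ _)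
    calc |(a - b) / α r| ≤ |(a - b) / α r - S u| + |S u| := by
          have h2 := abs_add_le ((a - b) / α r - S u) (S u)
          have h3 : (a - b) / α r - S u + S u = (a - b) / α r := by ring
          rw [h3] at h2; exact h2
      _ < 1 + B := by linarith
      _ = B + 1 := by ring
  have hab : |a - b| < (B + 1) * α r := by
    have h' : |a - b| / α r < B + 1 := by rwa [abs_div, abs_of_pos hαr] at hq
    exact (div_lt_iff₀ hαr).mp h'
  have hαr1 : α r < m / (2 * (B + 1)) := lt_of_lt_of_le hsm (min_le_left _ _)
  have hαr2 : α r < ε * (m / 2) ^ 2 / (2 * (B + 1) ^ 2) := lt_of_lt_of_le hsm (min_le_right _ _)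
  have habm : |a - b| < m / 2 := by
    have h' : (B + 1) * α r < m / 2 := by
      rw [lt_div_iff₀ (by positivity : (0:ℝ) < 2 * (B + 1))] at hαr1
      nlinarith
    linarith
  have hca : m / 2 ≤ a := by
    have h' := abs_lt.mp habm
    linarith
  have hcb : m / 2 ≤ b := by linarith
  have hR := logTaylor' (by positivity : (0:ℝ) < m / 2) hca hcb
  set R := Real.log a - Real.log b - (a - b) / b with hR_def
  have hsq : (a - b) ^ 2 ≤ ((B + 1) * α r) ^ 2 := by
    nlinarith [abs_nonneg (a - b), sq_abs (a - b)]
  have hRa : |R| ≤ ((B + 1) * α r) ^ 2 / (m / 2) ^ 2 := by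
    refine hR.trans ?_
    gcongr
  have hexp : (Real.log a - Real.log b) / α r - S u / b
      = ((a - b) / α r - S u) / b + R / α r := by
    rw [hR_def]
    field_simp
    ring
  rw [Real.dist_eq]
  have hterm1 : |((a - b) / α r - S u) / b| < ε / 2 := by
    rw [abs_div, abs_of_pos hb0]
    have hlt : |(a - b) / α r - S u| < ε * m / 2 := lt_of_lt_of_le hd1 (min_le_right _ _)
    have e1 : |(a - b) / α r - S u| / b ≤ |(a - b) / α r - S u| / m := by gcongr
    have e2 : |(a - b) / α r - S u| / m < (ε * m / 2) / m := by gcongr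
    have e3 : (ε * m / 2) / m = ε / 2 := by field_simp
    linarith
  have hterm2 : |R / α r| < ε / 2 := by
    rw [abs_div, abs_of_pos hαr, div_lt_iff₀ hαr]
    have e1 : ((B + 1) * α r) ^ 2 / (m / 2) ^ 2 < ε / 2 * α r := by
      rw [div_lt_iff₀ (by positivity : (0:ℝ) < (m / 2) ^ 2)]
      rw [lt_div_iff₀ (by positivity : (0:ℝ) < 2 * (B + 1) ^ 2)] at hαr2
      nlinarith [hαr.le, sq_nonneg (B + 1), mul_pos hαr hαr]
    linarith [hRa]
  calc |S u / b - (Real.log a - Real.log b) / α r|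
      = |((a - b) / α r - S u) / b + R / α r| := by
        rw [abs_sub_comm, hexp]
    _ ≤ |((a - b) / α r - S u) / b| + |R / α r| := abs_add_le _ _
    _ < ε / 2 + ε / 2 := by linarith
    _ = ε := by ring

set_option maxHeartbeats 1000000 in
private lemma aux_backward' {X : Type*} (s : Set X) (f : ℝ → X → ℝ) (g S : X → ℝ) (α : ℝ → ℝ)
    (m B : ℝ) (hm : 0 < m) (hB0 : 0 ≤ B)
    (hg1 : ∀ u ∈ s, m ≤ g u) (hg2 : ∀ u ∈ s, g u ≤ 1)
    (hS : ∀ u ∈ s, |S u| ≤ B)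
    (hf : ∀ᶠ r in atTop, ∀ u ∈ s, 0 < f r u)
    (hα : ∀ᶠ r in atTop, 0 < α r)
    (hα0 : Tendsto α atTop (nhds 0))
    (h : TendstoUniformlyOn (fun r u => (Real.log (f r u) - Real.log (g u)) / α r)
      (fun u => S u / g u) atTop s) :
    TendstoUniformlyOn (fun r u => (f r u - g u) / α r) S atTop s := by
  rw [Metric.tendstoUniformlyOn_iff] at h ⊢
  intro ε hε
  set B2 : ℝ := B / m + 1 with hB2_def
  have hB2 : (0:ℝ) < B2 := by positivity
  have hε1 : (0:ℝ) < min 1 (ε / 2) := by positivity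
  have h1 := h _ hε1
  have hKpos : (0:ℝ) < min ((1/4) / B2) (ε * (m / 2) ^ 2 / (8 * B2 ^ 2)) := by positivity
  have hαsmall := hα0.eventually_lt_const hKpos
  filter_upwards [h1, hα, hαsmall, hf] with r h1r hαr hsm hfr u hu
  have hb_m : m ≤ g u := hg1 u hu
  have hb1 : g u ≤ 1 := hg2 u hu
  have hb0 : 0 < g u := hm.trans_le hb_m
  have ha0 : 0 < f r u := hfr u hu
  set a := f r u with ha_def
  set b := g u with hb_def
  have hd1 : |(Real.log a - Real.log b) / α r - S u / b| < min 1 (ε / 2) := by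
    have h' := h1r u hu
    rw [Real.dist_eq, abs_sub_comm] at h'
    exact h'
  have hSb : |S u / b| ≤ B / m := by
    rw [abs_div, abs_of_pos hb0]
    have e1 : |S u| / b ≤ |S u| / m := by gcongr
    have e2 : |S u| / m ≤ B / m := by gcongr; exact hS u hu
    linarith
  have hq : |(Real.log a - Real.log b) / α r| < B2 := by
    have h1' : |(Real.log a - Real.log b) / α r - S u / b| < 1 :=
      lt_of_lt_of_le hd1 (min_le_left _ _)
    calc |(Real.log a - Real.log b) / α r|
        ≤ |(Real.log a - Real.log b) / α r - S u / b| + |S u / b| := by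
          have h2 := abs_add_le ((Real.log a - Real.log b) / α r - S u / b) (S u / b)
          have h3 : (Real.log a - Real.log b) / α r - S u / b + S u / b
              = (Real.log a - Real.log b) / α r := by ring
          rw [h3] at h2; exact h2
      _ < 1 + B / m := by linarith
      _ = B2 := by rw [hB2_def]; ring
  have hll : |Real.log a - Real.log b| < B2 * α r := by
    have h' : |Real.log a - Real.log b| / α r < B2 := by
      rwa [abs_div, abs_of_pos hαr] at hq
    exact (div_lt_iff₀ hαr).mp h'
  have hαr1 : α r < (1/4) / B2 := lt_of_lt_of_le hsm (min_le_left _ _)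
  have hαr2 : α r < ε * (m / 2) ^ 2 / (8 * B2 ^ 2) := lt_of_lt_of_le hsm (min_le_right _ _)
  have hll4 : |Real.log a - Real.log b| < 1/4 := by
    have h' : B2 * α r < 1/4 := by
      rw [lt_div_iff₀ hB2] at hαr1
      nlinarith
    exact hll.trans h'
  have hexp1 : |Real.exp (Real.log a - Real.log b) - 1| ≤ 2 * |Real.log a - Real.log b| :=
    Real.abs_exp_sub_one_le (by linarith)
  have ha_eq : a = b * Real.exp (Real.log a - Real.log b) := by
    rw [Real.exp_sub, Real.exp_log ha0, Real.exp_log hb0]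
    field_simp
  have hab : |a - b| ≤ 2 * B2 * α r := by
    have h2 : |a - b| = b * |Real.exp (Real.log a - Real.log b) - 1| := by
      nth_rewrite 1 [ha_eq]
      rw [show b * Real.exp (Real.log a - Real.log b) - b
          = b * (Real.exp (Real.log a - Real.log b) - 1) by ring,
        abs_mul, abs_of_pos hb0]
    rw [h2]
    calc b * |Real.exp (Real.log a - Real.log b) - 1|
        ≤ 1 * (2 * |Real.log a - Real.log b|) :=
          mul_le_mul hb1 hexp1 (abs_nonneg _) zero_le_one
      _ ≤ 2 * B2 * α r := by nlinarith [abs_nonneg (Real.log a - Real.log b)]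
  have hca : m / 2 ≤ a := by
    have hge : (1:ℝ)/2 ≤ Real.exp (Real.log a - Real.log b) := by
      have h' := abs_le.mp hexp1
      have h'' := abs_lt.mp hll4
      linarith
    calc m / 2 = m * (1/2) := by ring
      _ ≤ b * Real.exp (Real.log a - Real.log b) :=
          mul_le_mul hb_m hge (by norm_num) (by linarith)
      _ = a := ha_eq.symm
  have hcb : m / 2 ≤ b := by linarith
  have hR := logTaylor' (by positivity : (0:ℝ) < m / 2) hca hcb
  set R := Real.log a - Real.log b - (a - b) / b with hR_def
  have hsq : (a - b) ^ 2 ≤ (2 * B2 * α r) ^ 2 := by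
    nlinarith [abs_nonneg (a - b), sq_abs (a - b)]
  have hRa : |R| ≤ (2 * B2 * α r) ^ 2 / (m / 2) ^ 2 := by
    refine hR.trans ?_
    gcongr
  have hexp : (a - b) / α r - S u
      = b * ((Real.log a - Real.log b) / α r - S u / b) - b * (R / α r) := by
    rw [hR_def]
    field_simp
    ring
  rw [Real.dist_eq]
  have hterm1 : |b * ((Real.log a - Real.log b) / α r - S u / b)| < ε / 2 := by
    rw [abs_mul, abs_of_pos hb0]
    have hlt : |(Real.log a - Real.log b) / α r - S u / b| < ε / 2 :=
      lt_of_lt_of_le hd1 (min_le_right _ _)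
    nlinarith [abs_nonneg ((Real.log a - Real.log b) / α r - S u / b)]
  have hterm2 : |b * (R / α r)| ≤ ε / 2 := by
    rw [abs_mul, abs_of_pos hb0]
    have e0 : |R / α r| = |R| / α r := by rw [abs_div, abs_of_pos hαr]
    have e1 : |R| / α r ≤ ((2 * B2 * α r) ^ 2 / (m / 2) ^ 2) / α r := by gcongr
    have e2 : ((2 * B2 * α r) ^ 2 / (m / 2) ^ 2) / α r = 4 * B2 ^ 2 / (m / 2) ^ 2 * α r := by
      field_simp
      ring
    have e3 : 4 * B2 ^ 2 / (m / 2) ^ 2 * α r ≤ ε / 2 := by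
      rw [lt_div_iff₀ (by positivity : (0:ℝ) < 8 * B2 ^ 2)] at hαr2
      rw [div_mul_eq_mul_div, div_le_iff₀ (by positivity : (0:ℝ) < (m / 2) ^ 2)]
      nlinarith
    have e4 : b * |R / α r| ≤ 1 * |R / α r| :=
      mul_le_mul_of_nonneg_right hb1 (abs_nonneg _)
    rw [one_mul] at e4
    linarith [e0 ▸ e4]
  calc |S u - (a - b) / α r|
      = |b * ((Real.log a - Real.log b) / α r - S u / b) - b * (R / α r)| := by
        rw [abs_sub_comm, hexp]
    _ ≤ |b * ((Real.log a - Real.log b) / α r - S u / b)| + |b * (R / α r)| := abs_sub _ _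
    _ < ε / 2 + ε / 2 := by linarith
    _ = ε := by ring

/-- the equivalence (2.4): uniform convergence on `[δ,1]^d` of
`(C(u^{1/r})^r − C_∞(u))/α(r)` to `S(u)` is equivalent to uniform convergence of
`(r·log C(u^{1/r}) − log C_∞(u))/α(r)` to `S(u)/C_∞(u)`. -/
theorem statement5 {d : ℕ} (C L S : (Fin d → ℝ) → ℝ) (α : ℝ → ℝ) (δ : ℝ)
    (hδ0 : 0 < δ) (hδ1 : δ < 1)
    (hL : IsSTDF d L) (hC : IsCopulaLike d C)
    (hDOA : BmDOA d C (CinfFun d L))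
    (hαpos : ∀ r : ℝ, 0 < r → 0 < α r)
    (hα0 : Filter.Tendsto α Filter.atTop (nhds 0))
    (hScont : ContinuousOn S (Set.Icc (fun _ : Fin d => δ) (fun _ => 1))) :
    TendstoUniformlyOn
      (fun (r : ℝ) (u : Fin d → ℝ) =>
        (C (fun j => u j ^ (1 / r)) ^ r - CinfFun d L u) / α r)
      S Filter.atTop (Set.Icc (fun _ : Fin d => δ) (fun _ => 1))
    ↔
    TendstoUniformlyOn
      (fun (r : ℝ) (u : Fin d → ℝ) =>
        (r * Real.log (C (fun j => u j ^ (1 / r))) - Real.log (CinfFun d L u)) / α r)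
      (fun u => S u / CinfFun d L u) Filter.atTop
      (Set.Icc (fun _ : Fin d => δ) (fun _ => 1)) := by
  have hmem : ∀ u ∈ Set.Icc (fun _ : Fin d => δ) (fun _ => (1:ℝ)), ∀ j, δ ≤ u j ∧ u j ≤ 1 := by
    intro u hu j
    obtain ⟨h1, h2⟩ := Set.mem_Icc.mp hu
    exact ⟨h1 j, h2 j⟩
  set s : Set (Fin d → ℝ) := Set.Icc (fun _ : Fin d => δ) (fun _ => (1:ℝ)) with hs_def
  have hL0 : ∀ x : Fin d → ℝ, (∀ j, 0 ≤ x j) → 0 ≤ L x := by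
    intro x hx
    rcases Nat.eq_zero_or_pos d with hd | hd
    · subst hd
      have h2 : L ((2:ℝ) • x) = 2 * L x := hL.1 2 two_pos x hx
      have he : (2:ℝ) • x = x := by funext j; exact j.elim0
      rw [he] at h2
      linarith
    · exact le_trans (hx ⟨0, hd⟩) ((hL.2.2.2 x hx).1 ⟨0, hd⟩)
  set T : ℝ := -Real.log δ with hT_def
  have hT0 : 0 ≤ T := by
    have := Real.log_nonpos hδ0.le hδ1.le
    simp only [hT_def]; linarith
  set m : ℝ := Real.exp (-((d:ℝ) * T)) with hm_def
  have hm : 0 < m := Real.exp_pos _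
  have hgeq : ∀ u ∈ s, CinfFun d L u = Real.exp (-(L (fun j => -Real.log (u j)))) := by
    intro u hu
    unfold CinfFun
    rw [if_pos]
    intro j
    exact hδ0.trans_le (hmem u hu j).1
  have hxfact : ∀ u ∈ s, (∀ j, 0 ≤ -Real.log (u j)) ∧ (∀ j, -Real.log (u j) ≤ T) := by
    intro u hu
    constructor
    · intro j
      have := Real.log_nonpos (le_trans hδ0.le (hmem u hu j).1) (hmem u hu j).2
      linarith
    · intro j
      have := Real.log_le_log hδ0 (hmem u hu j).1
      simp only [hT_def]; linarith
  have hg1 : ∀ u ∈ s, m ≤ CinfFun d L u := by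
    intro u hu
    rw [hgeq u hu, hm_def]
    apply Real.exp_le_exp.mpr
    apply neg_le_neg
    calc L (fun j => -Real.log (u j)) ≤ ∑ j, -Real.log (u j) :=
          (hL.2.2.2 _ (hxfact u hu).1).2
      _ ≤ ∑ _j : Fin d, T := Finset.sum_le_sum fun j _ => (hxfact u hu).2 j
      _ = (d:ℝ) * T := by
          rw [Finset.sum_const, Finset.card_univ, Fintype.card_fin, nsmul_eq_mul]
  have hg2 : ∀ u ∈ s, CinfFun d L u ≤ 1 := by
    intro u hu
    rw [hgeq u hu]
    apply Real.exp_le_one_iff.mpr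
    simp only [neg_nonpos]
    exact hL0 _ (hxfact u hu).1
  obtain ⟨B0, hB0⟩ := (isCompact_Icc).exists_bound_of_continuousOn hScont
  set B : ℝ := max B0 0 with hB_def
  have hBnn : 0 ≤ B := le_max_right _ _
  have hS : ∀ u ∈ s, |S u| ≤ B := by
    intro u hu
    calc |S u| = ‖S u‖ := (Real.norm_eq_abs _).symm
      _ ≤ B0 := hB0 u hu
      _ ≤ B := le_max_left _ _
  have hδ1r : Tendsto (fun r : ℝ => (d:ℝ) * (1 - δ ^ (1/r))) atTop (nhds 0) := by
    have h1 : Tendsto (fun r : ℝ => Real.log δ * (1/r)) atTop (nhds 0) := by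
      have h0 := (tendsto_inv_atTop_zero (𝕜 := ℝ)).const_mul (Real.log δ)
      simpa [one_div, mul_comm] using h0
    have h2 : Tendsto (fun r : ℝ => δ ^ (1/r)) atTop (nhds 1) := by
      have h3 := (Real.continuous_exp.tendsto 0).comp h1
      simp only [Function.comp, Real.exp_zero] at h3
      refine h3.congr fun r => ?_
      show Real.exp (Real.log δ * (1/r)) = δ ^ (1/r)
      rw [Real.rpow_def_of_pos hδ0]
    have h4 := (tendsto_const_nhds (x := (1:ℝ)) (f := atTop)).sub h2
    have h5 := h4.const_mul (d:ℝ)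
    simpa using h5
  have hCpos : ∀ᶠ r : ℝ in atTop, ∀ u ∈ s, 1/2 < C (fun j => u j ^ (1/r)) := by
    filter_upwards [hδ1r.eventually_lt_const (show (0:ℝ) < 1/2 by norm_num),
      eventually_ge_atTop (1:ℝ)] with r hlt hr1 u hu
    have hr0 : (0:ℝ) < r := lt_of_lt_of_le one_pos hr1
    have hv : ∀ j, 0 ≤ u j ^ (1/r) ∧ u j ^ (1/r) ≤ 1 := fun j =>
      ⟨Real.rpow_nonneg (le_trans hδ0.le (hmem u hu j).1) _,
        Real.rpow_le_one (le_trans hδ0.le (hmem u hu j).1) (hmem u hu j).2 (by positivity)⟩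
    have hvδ : ∀ j, δ ^ (1/r) ≤ u j ^ (1/r) := fun j =>
      Real.rpow_le_rpow hδ0.le (hmem u hu j).1 (by positivity)
    have hlip := hC.2.2 (fun _ => 1) (fun j => u j ^ (1/r))
      (fun j => ⟨zero_le_one, le_refl 1⟩) hv
    rw [hC.1] at hlip
    have hsum : ∑ j, |(1:ℝ) - u j ^ (1/r)| ≤ (d:ℝ) * (1 - δ ^ (1/r)) := by
      calc ∑ j, |(1:ℝ) - u j ^ (1/r)| = ∑ j, ((1:ℝ) - u j ^ (1/r)) :=
            Finset.sum_congr rfl fun j _ => abs_of_nonneg (by linarith [(hv j).2])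
        _ ≤ ∑ _j : Fin d, (1 - δ ^ (1/r)) := Finset.sum_le_sum fun j _ => by linarith [hvδ j]
        _ = (d:ℝ) * (1 - δ ^ (1/r)) := by
            rw [Finset.sum_const, Finset.card_univ, Fintype.card_fin, nsmul_eq_mul]
    have habs := abs_lt.mp (lt_of_le_of_lt hlip (lt_of_le_of_lt hsum hlt))
    linarith [habs.2]
  have hαev : ∀ᶠ r : ℝ in atTop, 0 < α r :=
    (eventually_gt_atTop (0:ℝ)).mono fun r hr => hαpos r hr
  have hf : ∀ᶠ r : ℝ in atTop, ∀ u ∈ s, 0 < C (fun j => u j ^ (1/r)) ^ r :=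
    hCpos.mono fun r h u hu => Real.rpow_pos_of_pos (by linarith [h u hu]) r
  have hcongr : ∀ᶠ r : ℝ in atTop, Set.EqOn
      (fun u : Fin d → ℝ =>
        (Real.log (C (fun j => u j ^ (1/r)) ^ r) - Real.log (CinfFun d L u)) / α r)
      (fun u : Fin d → ℝ =>
        (r * Real.log (C (fun j => u j ^ (1/r))) - Real.log (CinfFun d L u)) / α r) s :=
    hCpos.mono fun r h u hu => by
      simp only
      rw [Real.log_rpow (by linarith [h u hu])]
  constructor
  · intro H
    have H2 := aux_forward' s (fun r u => C (fun j => u j ^ (1/r)) ^ r) (CinfFun d L) S α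
      m B hm hBnn hg1 hS hαev hα0 H
    exact (tuo_congr_iff' hcongr).mp H2
  · intro H
    exact aux_backward' s (fun r u => C (fun j => u j ^ (1/r)) ^ r) (CinfFun d L) S α
      m B hm hBnn hg1 hg2 hS hf hαev hα0 ((tuo_congr_iff' hcongr).mpr H)
end
end

section
/- Let L be a d-variate stable tail dependence function such that for every j = 1,…,d the first-order partial derivative ∂_j L exists and is continuous on {x ∈ [0,∞)^d : x_j > 0}. Then the convergences r·(L(x + x²/r) − L(x)) → Γ₁(x) and r·(L(x) − L(x − x²/r)) → Γ₂(x) (with x² := (x_1²,…,x_d²)) are uniform on [0,T]^d for every T > 0, and Γ₁ = Γ₂ = Γ, where Γ(x) = Σ_{j : x_j > 0} x_j² · ∂_j L(x). -/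
open Filter Topology

noncomputable section

private lemma update_nonneg_mem {d : ℕ} {z : Fin d → ℝ} (hz : ∀ i, 0 ≤ z i) (j : Fin d)
    {t : ℝ} (ht : 0 ≤ t) : ∀ i, 0 ≤ Function.update z j t i := by
  intro i
  rcases eq_or_ne i j with rfl | h
  · simpa using ht
  · simpa [Function.update_apply, h] using hz i

private lemma mem_Ici_pi {d : ℕ} {z : Fin d → ℝ} (hz : ∀ i, 0 ≤ z i) :
    z ∈ Set.Ici (0 : Fin d → ℝ) := by
  intro i
  simpa using hz i

private lemma coordConvex {d : ℕ} {L : (Fin d → ℝ) → ℝ}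
    (hconv : ConvexOn ℝ (Set.Ici (0 : Fin d → ℝ)) L)
    {z : Fin d → ℝ} (hz : ∀ i, 0 ≤ z i) (j : Fin d) :
    ConvexOn ℝ (Set.Ici (0 : ℝ)) (fun t => L (Function.update z j t)) := by
  refine ⟨convex_Ici 0, ?_⟩
  intro a ha b hb p q hp hq hpq
  simp only [smul_eq_mul]
  have key : Function.update z j (p * a + q * b)
      = p • Function.update z j a + q • Function.update z j b := by
    funext i
    rcases eq_or_ne i j with rfl | h
    · simp
    · simp only [Function.update_apply, if_neg h, Pi.add_apply, Pi.smul_apply, smul_eq_mul]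
      rw [← add_mul, hpq, one_mul]
  rw [key]
  exact hconv.2 (mem_Ici_pi (update_nonneg_mem hz j (Set.mem_Ici.1 ha)))
    (mem_Ici_pi (update_nonneg_mem hz j (Set.mem_Ici.1 hb))) hp hq hpq

private lemma deriv_bounds {d : ℕ} {L : (Fin d → ℝ) → ℝ} (hL : IsSTDF d L)
    {Lj : Fin d → (Fin d → ℝ) → ℝ}
    (hderiv : ∀ j : Fin d, ∀ x : Fin d → ℝ, (∀ i, 0 ≤ x i) → 0 < x j →
      HasDerivAt (fun h : ℝ => L (Function.update x j h)) (Lj j x) (x j))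
    {B : ℝ} (hB : 0 ≤ B) {w : Fin d → ℝ} (hw : ∀ i, 0 ≤ w i ∧ w i ≤ B)
    {j : Fin d} (hwj : 0 < w j) :
    -((d : ℝ) * B) / w j ≤ Lj j w ∧ Lj j w ≤ 1 := by
  obtain ⟨hhom, hconv, hone, hbnd⟩ := hL
  set M : ℝ := (d : ℝ) * B with hM
  have hM0 : 0 ≤ M := by positivity
  have hw0 : ∀ i, 0 ≤ w i := fun i => (hw i).1
  have hφc := coordConvex hconv hw0 j
  have hd : HasDerivAt (fun t => L (Function.update w j t)) (Lj j w) (w j) :=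
    hderiv j w hw0 hwj
  set φ : ℝ → ℝ := fun t => L (Function.update w j t) with hφdef
  have hup : ∀ t : ℝ, 0 ≤ t → φ t ≤ t + M := by
    intro t ht
    have h1 := (hbnd _ (update_nonneg_mem hw0 j ht)).2
    have h3 : ∑ i ∈ Finset.univ \ {j}, w i ≤ M := by
      calc ∑ i ∈ Finset.univ \ {j}, w i ≤ ∑ _i ∈ Finset.univ \ {j}, B :=
            Finset.sum_le_sum fun i _ => (hw i).2
        _ = ((Finset.univ \ {j}).card : ℝ) * B := by
            rw [Finset.sum_const, nsmul_eq_mul]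
        _ ≤ (d : ℝ) * B := by
            have hcard : ((Finset.univ \ {j}).card : ℕ) ≤ d := by
              calc (Finset.univ \ {j}).card ≤ (Finset.univ : Finset (Fin d)).card :=
                  Finset.card_le_card Finset.sdiff_subset
                _ = d := by simp
            exact mul_le_mul_of_nonneg_right (by exact_mod_cast hcard) hB
    have h2 : ∑ i, Function.update w j t i = t + ∑ i ∈ Finset.univ \ {j}, w i := by
      rw [Finset.sum_update_of_mem (Finset.mem_univ j)]
    have : φ t ≤ ∑ i, Function.update w j t i := h1
    rw [h2] at this
    linarith
  have hlo : ∀ t : ℝ, 0 ≤ t → t ≤ φ t := by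
    intro t ht
    have := ((hbnd _ (update_nonneg_mem hw0 j ht)).1) j
    simpa using this
  constructor
  · have hs := hφc.slope_le_of_hasDerivAt (Set.mem_Ici.2 le_rfl) (Set.mem_Ici.2 hwj.le) hwj hd
    rw [slope_def_field] at hs
    have h1 : (0 : ℝ) ≤ φ (w j) := le_trans hwj.le (hlo _ hwj.le)
    have h2 : φ 0 ≤ M := by simpa using hup 0 le_rfl
    have h3 : -M / w j ≤ (φ (w j) - φ 0) / (w j - 0) := by
      rw [sub_zero]
      exact (div_le_div_iff_of_pos_right hwj).2 (by linarith)
    linarith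
  · have key : ∀ u : ℝ, w j < u → Lj j w ≤ 1 + M / (u - w j) := by
      intro u hu
      have hs := hφc.le_slope_of_hasDerivAt (Set.mem_Ici.2 hwj.le)
        (Set.mem_Ici.2 (le_trans hwj.le hu.le)) hu hd
      rw [slope_def_field] at hs
      have h1 : φ u ≤ u + M := hup u (le_trans hwj.le hu.le)
      have h2 : w j ≤ φ (w j) := hlo _ hwj.le
      have hpos : 0 < u - w j := by linarith
      have h4 : (φ u - φ (w j)) / (u - w j) ≤ ((u - w j) + M) / (u - w j) :=
        (div_le_div_iff_of_pos_right hpos).2 (by linarith)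
      have h5 : ((u - w j) + M) / (u - w j) = 1 + M / (u - w j) := by
        field_simp
      linarith
    have t0 : Tendsto (fun u : ℝ => M / (u - w j)) atTop (𝓝 0) := by
      apply Tendsto.div_atTop tendsto_const_nhds
      have := tendsto_atTop_add_const_right atTop (-(w j)) tendsto_id
      refine this.congr fun u => ?_
      simp [sub_eq_add_neg]
    have t1 : Tendsto (fun u : ℝ => 1 + M / (u - w j)) atTop (𝓝 (1 + 0)) :=
      tendsto_const_nhds.add t0
    rw [add_zero] at t1
    refine ge_of_tendsto t1 ?_
    filter_upwards [eventually_gt_atTop (w j)] with u hu using key u hu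

private lemma mvt_coord {d : ℕ} {L : (Fin d → ℝ) → ℝ}
    {Lj : Fin d → (Fin d → ℝ) → ℝ}
    (hderiv : ∀ j : Fin d, ∀ x : Fin d → ℝ, (∀ i, 0 ≤ x i) → 0 < x j →
      HasDerivAt (fun h : ℝ => L (Function.update x j h)) (Lj j x) (x j))
    {z : Fin d → ℝ} (hz : ∀ i, 0 ≤ z i)
    (j : Fin d) {a b : ℝ} (ha : 0 < a) (hab : a < b) :
    ∃ c, a ≤ c ∧ c ≤ b ∧
      L (Function.update z j b) - L (Function.update z j a)
        = (b - a) * Lj j (Function.update z j c) := by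
  have hasD : ∀ t ∈ Set.Icc a b, HasDerivAt (fun h => L (Function.update z j h))
      (Lj j (Function.update z j t)) t := by
    intro t ht
    have h0 : 0 < t := lt_of_lt_of_le ha ht.1
    have := hderiv j (Function.update z j t) (update_nonneg_mem hz j h0.le)
      (by simpa using h0)
    simpa [Function.update_idem] using this
  have hcont : ContinuousOn (fun h => L (Function.update z j h)) (Set.Icc a b) :=
    fun t ht => ((hasD t ht).continuousAt).continuousWithinAt
  obtain ⟨c, hc, hceq⟩ := exists_hasDerivAt_eq_slope (fun h => L (Function.update z j h))
    (fun t => Lj j (Function.update z j t)) hab hcont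
    (fun t ht => hasD t (Set.Ioo_subset_Icc_self ht))
  refine ⟨c, hc.1.le, hc.2.le, ?_⟩
  rw [hceq, mul_comm]
  exact (div_mul_cancel₀ _ (sub_ne_zero.2 hab.ne')).symm

set_option maxHeartbeats 1000000 in
private lemma key_est {d : ℕ} {L : (Fin d → ℝ) → ℝ} (hL : IsSTDF d L)
    {Lj : Fin d → (Fin d → ℝ) → ℝ}
    (hderiv : ∀ j : Fin d, ∀ x : Fin d → ℝ, (∀ i, 0 ≤ x i) → 0 < x j →
      HasDerivAt (fun h : ℝ => L (Function.update x j h)) (Lj j x) (x j))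
    (hcont : ∀ j : Fin d, ContinuousOn (Lj j) {x : Fin d → ℝ | (∀ i, 0 ≤ x i) ∧ 0 < x j})
    (T : ℝ) (hT : 0 < T) (j : Fin d) {ε : ℝ} (hε : 0 < ε) :
    ∀ᶠ r : ℝ in atTop, ∀ x z : Fin d → ℝ,
      (∀ i, 0 ≤ x i ∧ x i ≤ T) → (∀ i, 0 ≤ z i ∧ z i ≤ T + T ^ 2) →
      (∀ i, |z i - x i| ≤ T ^ 2 / r) → x j / 2 ≤ z j → 0 < x j →
      |x j ^ 2 * Lj j z - x j ^ 2 * Lj j x| < ε := by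
  set T' : ℝ := T + T ^ 2 with hT'def
  have hT'0 : 0 < T' := by positivity
  have hTT' : T ≤ T' := le_add_of_nonneg_right (sq_nonneg T)
  set M : ℝ := (d : ℝ) * T' with hMdef
  have hM0 : 0 ≤ M := by positivity
  set δ : ℝ := min 1 (ε / (3 * M + 3)) with hδdef
  have hδ0 : 0 < δ := lt_min one_pos (by positivity)
  have hδ1 : δ ≤ 1 := min_le_left _ _
  have hδε : δ * (3 * M + 3) ≤ ε := by
    have h := min_le_right 1 (ε / (3 * M + 3))
    calc δ * (3 * M + 3) ≤ (ε / (3 * M + 3)) * (3 * M + 3) :=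
        mul_le_mul_of_nonneg_right h (by positivity)
      _ = ε := div_mul_cancel₀ _ (by positivity)
  set K : Set (Fin d → ℝ) :=
    (Set.Icc (0 : Fin d → ℝ) (fun _ => T')) ∩ {w | δ / 2 ≤ w j} with hKdef
  have hKcompact : IsCompact K :=
    isCompact_Icc.inter_right (isClosed_le continuous_const (continuous_apply j))
  have hKsub : K ⊆ {x : Fin d → ℝ | (∀ i, 0 ≤ x i) ∧ 0 < x j} := by
    rintro w ⟨⟨h1, _h2⟩, h3⟩
    exact ⟨fun i => by simpa using h1 i, lt_of_lt_of_le (by positivity) h3⟩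
  have hUC : UniformContinuousOn (Lj j) K :=
    hKcompact.uniformContinuousOn_of_continuous ((hcont j).mono hKsub)
  set ε' : ℝ := ε / (T' ^ 2 + 1) with hε'def
  have hε'0 : 0 < ε' := by positivity
  obtain ⟨η, hη0, hη⟩ := Metric.uniformContinuousOn_iff.1 hUC ε' hε'0
  clear_value T' M δ ε' K
  filter_upwards [eventually_ge_atTop (T ^ 2 / η + 1), eventually_ge_atTop 1] with r hrη hr1
  have hr0 : (0 : ℝ) < r := lt_of_lt_of_le one_pos hr1
  intro x z hx hz hdist hzj hxj
  have hzj0 : 0 < z j := lt_of_lt_of_le (by positivity) hzj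
  have hxT' : ∀ i, 0 ≤ x i ∧ x i ≤ T' := fun i => ⟨(hx i).1, le_trans (hx i).2 hTT'⟩
  by_cases hcase : x j ≤ δ
  · -- small coordinate: use the crude derivative bounds
    obtain ⟨hbx1, hbx2⟩ := deriv_bounds hL hderiv hT'0.le hxT' hxj
    obtain ⟨hbz1, hbz2⟩ := deriv_bounds hL hderiv hT'0.le hz hzj0
    rw [← hMdef] at hbx1 hbz1
    -- clear denominators
    have hax : -M ≤ Lj j x * x j := by
      have := (div_le_iff₀ hxj).1 hbx1
      linarith
    have haz : -M ≤ Lj j z * z j := by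
      have := (div_le_iff₀ hzj0).1 hbz1
      linarith
    -- upper bounds
    have hX2 : x j ^ 2 * Lj j z ≤ x j ^ 2 :=
      mul_le_of_le_one_right (sq_nonneg _) hbz2
    have hY2 : x j ^ 2 * Lj j x ≤ x j ^ 2 :=
      mul_le_of_le_one_right (sq_nonneg _) hbx2
    -- lower bounds
    have hzjT : z j ≤ T' := (hz j).2
    have hX1 : -(2 * M * x j) ≤ x j ^ 2 * Lj j z := by
      rcases le_or_gt 0 (Lj j z) with h | h
      · nlinarith [sq_nonneg (x j), mul_nonneg hM0 hxj.le, mul_nonneg (sq_nonneg (x j)) h]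
      · have h1 : x j * Lj j z ≤ 0 := mul_nonpos_of_nonneg_of_nonpos hxj.le h.le
        have h2 : x j ≤ 2 * z j := by linarith
        have h3 : (2 * z j) * (x j * Lj j z) ≤ x j * (x j * Lj j z) :=
          mul_le_mul_of_nonpos_right h2 h1
        have h4 : 2 * x j * (-M) ≤ 2 * x j * (Lj j z * z j) :=
          mul_le_mul_of_nonneg_left haz (by positivity)
        nlinarith [h3, h4]
    have hY1 : -(M * x j) ≤ x j ^ 2 * Lj j x := by
      nlinarith [mul_le_mul_of_nonneg_left hax hxj.le]
    have ha : x j ^ 2 ≤ δ * x j := by nlinarith [hxj.le]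
    have hb : δ * x j ≤ δ * δ := mul_le_mul_of_nonneg_left hcase hδ0.le
    have hc : δ * δ ≤ δ := by nlinarith [hδ1, hδ0.le]
    have hd : M * x j ≤ M * δ := mul_le_mul_of_nonneg_left hcase hM0
    rw [abs_lt]
    constructor
    · nlinarith [hM0, hδ0]
    · nlinarith [hM0, hδ0]
  · push_neg at hcase
    have hxK : x ∈ K := by
      rw [hKdef]
      refine ⟨Set.mem_Icc.2 ⟨?_, ?_⟩, ?_⟩
      · intro i; simpa using (hx i).1
      · intro i; simpa using (hxT' i).2
      · simp only [Set.mem_setOf_eq]; linarith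
    have hzK : z ∈ K := by
      rw [hKdef]
      refine ⟨Set.mem_Icc.2 ⟨?_, ?_⟩, ?_⟩
      · intro i; simpa using (hz i).1
      · intro i; simpa using (hz i).2
      · simp only [Set.mem_setOf_eq]; linarith
    have hdzx : dist z x < η := by
      have h1 : dist z x ≤ T ^ 2 / r := by
        rw [dist_pi_le_iff (by positivity)]
        intro i
        rw [Real.dist_eq]
        exact hdist i
      have h2 : T ^ 2 / r < η := by
        rw [div_lt_iff₀ hr0]
        have : T ^ 2 / η < r := lt_of_lt_of_le (by linarith) hrη
        calc T ^ 2 = (T ^ 2 / η) * η := (div_mul_cancel₀ _ hη0.ne').symm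
          _ < r * η := mul_lt_mul_of_pos_right this hη0
          _ = η * r := mul_comm _ _
      linarith
    have hLL : |Lj j z - Lj j x| < ε' := by
      have := hη z hzK x hxK hdzx
      rwa [Real.dist_eq] at this
    have hxj2 : x j ^ 2 ≤ T' ^ 2 := by
      have h1 : x j ≤ T' := (hxT' j).2
      nlinarith [(hx j).1]
    calc |x j ^ 2 * Lj j z - x j ^ 2 * Lj j x| = x j ^ 2 * |Lj j z - Lj j x| := by
          rw [← mul_sub, abs_mul, abs_of_nonneg (sq_nonneg _)]
      _ ≤ T' ^ 2 * |Lj j z - Lj j x| :=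
          mul_le_mul_of_nonneg_right hxj2 (abs_nonneg _)
      _ < T' ^ 2 * ε' + ε' := by nlinarith [abs_nonneg (Lj j z - Lj j x), hε'0]
      _ = ε := by rw [hε'def]; field_simp

set_option maxHeartbeats 1600000

/-- Lemma 2.5 (ii). If the partial derivatives `∂_j L` exist and are
continuous on `{x ≥ 0 : x_j > 0}`, then both convergences in (2.1) and (2.2) are uniform
on `[0,T]^d` and `Γ₁ = Γ₂ = Γ` with `Γ(x) = Σ_{j : x_j > 0} x_j²·∂_j L(x)`. -/
theorem statement8 {d : ℕ} (L : (Fin d → ℝ) → ℝ) (hL : IsSTDF d L)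
    (Lj : Fin d → (Fin d → ℝ) → ℝ)
    (hderiv : ∀ j : Fin d, ∀ x : Fin d → ℝ, (∀ i, 0 ≤ x i) → 0 < x j →
      HasDerivAt (fun h : ℝ => L (Function.update x j h)) (Lj j x) (x j))
    (hcont : ∀ j : Fin d,
      ContinuousOn (Lj j) {x : Fin d → ℝ | (∀ i, 0 ≤ x i) ∧ 0 < x j}) :
    ∀ T : ℝ, 0 < T →
      TendstoUniformlyOn
        (fun (r : ℝ) (x : Fin d → ℝ) => r * (L (fun j => x j + (x j) ^ 2 / r) - L x))
        (fun x => ∑ j, if 0 < x j then (x j) ^ 2 * Lj j x else 0)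
        Filter.atTop (Set.Icc (0 : Fin d → ℝ) (fun _ => T)) ∧
      TendstoUniformlyOn
        (fun (r : ℝ) (x : Fin d → ℝ) => r * (L x - L (fun j => x j - (x j) ^ 2 / r)))
        (fun x => ∑ j, if 0 < x j then (x j) ^ 2 * Lj j x else 0)
        Filter.atTop (Set.Icc (0 : Fin d → ℝ) (fun _ => T)) := by
  intro T hT
  constructor
  · rw [Metric.tendstoUniformlyOn_iff]
    intro ε hε
    have hε'0 : 0 < ε / (2 * (d : ℝ) + 2) := by positivity
    have HK := Filter.eventually_all.2 fun j : Fin d =>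
      key_est hL hderiv hcont T hT j hε'0
    filter_upwards [HK, eventually_ge_atTop (2 * T + 2)] with r hKr hrT
    intro x hx
    have hr1 : (1 : ℝ) ≤ r := by linarith
    have hr0 : (0 : ℝ) < r := by linarith
    have hx0 : ∀ i, 0 ≤ x i := fun i => by simpa using hx.1 i
    have hxT : ∀ i, x i ≤ T := fun i => by simpa using hx.2 i
    have hxb : ∀ i, 0 ≤ x i ∧ x i ≤ T := fun i => ⟨hx0 i, hxT i⟩
    set Y : ℕ → (Fin d → ℝ) := fun k i => if (i : ℕ) < k then x i + x i ^ 2 / r else x i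
      with hYdef
    have hY0 : Y 0 = x := by funext i; simp [hYdef]
    have hYd : Y d = fun i => x i + x i ^ 2 / r := by
      funext i; simp [hYdef, i.isLt]
    have hterm : ∀ k : ℕ, ∀ hk : k < d,
        |r * (L (Y (k + 1)) - L (Y k))
          - (if 0 < x ⟨k, hk⟩ then x ⟨k, hk⟩ ^ 2 * Lj ⟨k, hk⟩ x else 0)|
          ≤ ε / (2 * (d : ℝ) + 2) := by
      intro k hk
      set j : Fin d := ⟨k, hk⟩ with hjdef
      by_cases hxj : 0 < x j
      · have hbpos : 0 < x j ^ 2 / r := by positivity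
        have hYk0 : ∀ i, 0 ≤ Y k i := by
          intro i
          simp only [hYdef]
          split
          · have := hx0 i; positivity
          · exact hx0 i
        obtain ⟨c, hc1, hc2, hceq⟩ := mvt_coord hderiv hYk0 j hxj
          (by linarith : x j < x j + x j ^ 2 / r)
        have hupd1 : Function.update (Y k) j (x j) = Y k := by
          have hYkj : Y k j = x j := by
            simp only [hYdef]
            rw [if_neg (by simp [hjdef])]
          rw [← hYkj, Function.update_eq_self]
        have hupd2 : Function.update (Y k) j (x j + x j ^ 2 / r) = Y (k + 1) := by
          funext i
          rcases eq_or_ne i j with rfl | h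
          · rw [Function.update_self]
            simp only [hYdef]
            rw [if_pos (by simp [hjdef])]
          · rw [Function.update_of_ne h]
            have hik : (i : ℕ) ≠ k := fun hh => h (Fin.ext hh)
            simp only [hYdef]
            by_cases h2 : (i : ℕ) < k
            · rw [if_pos h2, if_pos (by omega)]
            · rw [if_neg h2, if_neg (by omega)]
        rw [hupd2, hupd1] at hceq
        set z : Fin d → ℝ := Function.update (Y k) j c with hzdef
        have hrL : r * (L (Y (k + 1)) - L (Y k)) = x j ^ 2 * Lj j z := by
          rw [hceq, show x j + x j ^ 2 / r - x j = x j ^ 2 / r by ring]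
          field_simp
        rw [hrL, if_pos hxj]
        refine le_of_lt (hKr j x z hxb ?_ ?_ ?_ hxj)
        · intro i
          rcases eq_or_ne i j with rfl | h
          · rw [hzdef, Function.update_self]
            constructor
            · linarith [hxj.le]
            · have h1 : x j ^ 2 / r ≤ x j ^ 2 := div_le_self (sq_nonneg _) hr1
              have h2 : x j ^ 2 ≤ T ^ 2 := by nlinarith [hx0 j, hxT j]
              nlinarith [hxT j]
          · rw [hzdef, Function.update_of_ne h]
            simp only [hYdef]
            split
            · constructor
              · have := hx0 i; positivity
              · have h1 : x i ^ 2 / r ≤ x i ^ 2 := div_le_self (sq_nonneg _) hr1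
                have h2 : x i ^ 2 ≤ T ^ 2 := by nlinarith [hx0 i, hxT i]
                nlinarith [hxT i]
            · exact ⟨hx0 i, by nlinarith [hxT i, sq_nonneg T]⟩
        · intro i
          rcases eq_or_ne i j with rfl | h
          · rw [hzdef, Function.update_self]
            rw [abs_of_nonneg (by linarith)]
            have h2 : x j ^ 2 ≤ T ^ 2 := by nlinarith [hx0 j, hxT j]
            have h3 : x j ^ 2 / r ≤ T ^ 2 / r := (div_le_div_iff_of_pos_right hr0).2 h2
            linarith
          · rw [hzdef, Function.update_of_ne h]
            simp only [hYdef]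
            split
            · rw [show x i + x i ^ 2 / r - x i = x i ^ 2 / r by ring]
              rw [abs_of_nonneg (by positivity)]
              have h2 : x i ^ 2 ≤ T ^ 2 := by nlinarith [hx0 i, hxT i]
              exact (div_le_div_iff_of_pos_right hr0).2 h2
            · rw [sub_self, abs_zero]; positivity
        · rw [hzdef, Function.update_self]
          linarith [hxj.le]
      · have hxj0 : x j = 0 := le_antisymm (not_lt.1 hxj) (hx0 j)
        have hYeq : Y (k + 1) = Y k := by
          funext i
          simp only [hYdef]
          rcases lt_trichotomy (i : ℕ) k with h | h | h
          · rw [if_pos (by omega), if_pos h]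
          · have hij : i = j := Fin.ext h
            rw [if_pos (by omega), if_neg (by omega), hij, hxj0]
            ring
          · rw [if_neg (by omega), if_neg (by omega)]
        rw [hYeq, if_neg hxj]
        simpa using le_of_lt hε'0
    have htel : r * (L (fun i => x i + x i ^ 2 / r) - L x)
        = ∑ k ∈ Finset.range d, r * (L (Y (k + 1)) - L (Y k)) := by
      rw [← Finset.mul_sum, Finset.sum_range_sub (fun k => L (Y k)), hY0, hYd]
    have hΓ : ∑ j : Fin d, (if 0 < x j then x j ^ 2 * Lj j x else 0)
        = ∑ k ∈ Finset.range d,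
            (if hk : k < d then
              (if 0 < x ⟨k, hk⟩ then x ⟨k, hk⟩ ^ 2 * Lj ⟨k, hk⟩ x else 0) else 0) := by
      rw [← Fin.sum_univ_eq_sum_range]
      exact Finset.sum_congr rfl fun i _ => by simp [i.isLt]
    rw [Real.dist_eq, htel, hΓ, ← Finset.sum_sub_distrib]
    refine lt_of_le_of_lt (Finset.abs_sum_le_sum_abs _ _) ?_
    have hstep : ∑ k ∈ Finset.range d,
        |(if hk : k < d then
            (if 0 < x ⟨k, hk⟩ then x ⟨k, hk⟩ ^ 2 * Lj ⟨k, hk⟩ x else 0) else 0)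
          - r * (L (Y (k + 1)) - L (Y k))|
        ≤ ∑ _k ∈ Finset.range d, ε / (2 * (d : ℝ) + 2) := by
      refine Finset.sum_le_sum fun k hk => ?_
      have hkd : k < d := Finset.mem_range.1 hk
      rw [dif_pos hkd, abs_sub_comm]
      exact hterm k hkd
    refine lt_of_le_of_lt hstep ?_
    rw [Finset.sum_const, Finset.card_range, nsmul_eq_mul, mul_div_assoc',
      div_lt_iff₀ (by positivity)]
    nlinarith [Nat.cast_nonneg (α := ℝ) d, hε]
  · rw [Metric.tendstoUniformlyOn_iff]
    intro ε hε
    have hε'0 : 0 < ε / (2 * (d : ℝ) + 2) := by positivity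
    have HK := Filter.eventually_all.2 fun j : Fin d =>
      key_est hL hderiv hcont T hT j hε'0
    filter_upwards [HK, eventually_ge_atTop (2 * T + 2)] with r hKr hrT
    intro x hx
    have hr1 : (1 : ℝ) ≤ r := by linarith
    have hr0 : (0 : ℝ) < r := by linarith
    have hx0 : ∀ i, 0 ≤ x i := fun i => by simpa using hx.1 i
    have hxT : ∀ i, x i ≤ T := fun i => by simpa using hx.2 i
    have hxb : ∀ i, 0 ≤ x i ∧ x i ≤ T := fun i => ⟨hx0 i, hxT i⟩
    have hxir : ∀ i, x i ^ 2 / r ≤ x i := by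
      intro i
      rw [div_le_iff₀ hr0]
      nlinarith [hx0 i, hxT i]
    set Y : ℕ → (Fin d → ℝ) := fun k i => if (i : ℕ) < k then x i - x i ^ 2 / r else x i
      with hYdef
    have hY0 : Y 0 = x := by funext i; simp [hYdef]
    have hYd : Y d = fun i => x i - x i ^ 2 / r := by
      funext i; simp [hYdef, i.isLt]
    have hterm : ∀ k : ℕ, ∀ hk : k < d,
        |r * (L (Y k) - L (Y (k + 1)))
          - (if 0 < x ⟨k, hk⟩ then x ⟨k, hk⟩ ^ 2 * Lj ⟨k, hk⟩ x else 0)|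
          ≤ ε / (2 * (d : ℝ) + 2) := by
      intro k hk
      set j : Fin d := ⟨k, hk⟩ with hjdef
      by_cases hxj : 0 < x j
      · have hbpos : 0 < x j ^ 2 / r := by positivity
        have ha : 0 < x j - x j ^ 2 / r := by
          rw [sub_pos, div_lt_iff₀ hr0]
          nlinarith [hxT j]
        have hYk0 : ∀ i, 0 ≤ Y k i := by
          intro i
          simp only [hYdef]
          split
          · linarith [hxir i]
          · exact hx0 i
        obtain ⟨c, hc1, hc2, hceq⟩ := mvt_coord hderiv hYk0 j ha
          (by linarith : x j - x j ^ 2 / r < x j)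
        have hupd1 : Function.update (Y k) j (x j) = Y k := by
          have hYkj : Y k j = x j := by
            simp only [hYdef]
            rw [if_neg (by simp [hjdef])]
          rw [← hYkj, Function.update_eq_self]
        have hupd2 : Function.update (Y k) j (x j - x j ^ 2 / r) = Y (k + 1) := by
          funext i
          rcases eq_or_ne i j with rfl | h
          · rw [Function.update_self]
            simp only [hYdef]
            rw [if_pos (by simp [hjdef])]
          · rw [Function.update_of_ne h]
            have hik : (i : ℕ) ≠ k := fun hh => h (Fin.ext hh)
            simp only [hYdef]
            by_cases h2 : (i : ℕ) < k
            · rw [if_pos h2, if_pos (by omega)]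
            · rw [if_neg h2, if_neg (by omega)]
        rw [hupd2, hupd1] at hceq
        set z : Fin d → ℝ := Function.update (Y k) j c with hzdef
        have hrL : r * (L (Y k) - L (Y (k + 1))) = x j ^ 2 * Lj j z := by
          rw [hceq, show x j - (x j - x j ^ 2 / r) = x j ^ 2 / r by ring]
          field_simp
        rw [hrL, if_pos hxj]
        refine le_of_lt (hKr j x z hxb ?_ ?_ ?_ hxj)
        · intro i
          rcases eq_or_ne i j with rfl | h
          · rw [hzdef, Function.update_self]
            constructor
            · linarith
            · nlinarith [hxT j, sq_nonneg T, hc2]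
          · rw [hzdef, Function.update_of_ne h]
            simp only [hYdef]
            split
            · have hnn : 0 ≤ x i ^ 2 / r := div_nonneg (sq_nonneg (x i)) hr0.le
              exact ⟨by linarith [hxir i], by nlinarith [hxT i, sq_nonneg T]⟩
            · exact ⟨hx0 i, by nlinarith [hxT i, sq_nonneg T]⟩
        · intro i
          rcases eq_or_ne i j with rfl | h
          · rw [hzdef, Function.update_self]
            rw [abs_of_nonpos (by linarith)]
            have h2 : x j ^ 2 ≤ T ^ 2 := by nlinarith [hx0 j, hxT j]
            have h3 : x j ^ 2 / r ≤ T ^ 2 / r := (div_le_div_iff_of_pos_right hr0).2 h2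
            linarith
          · rw [hzdef, Function.update_of_ne h]
            simp only [hYdef]
            split
            · rw [show x i - x i ^ 2 / r - x i = -(x i ^ 2 / r) by ring]
              rw [abs_neg, abs_of_nonneg (by positivity)]
              have h2 : x i ^ 2 ≤ T ^ 2 := by nlinarith [hx0 i, hxT i]
              exact (div_le_div_iff_of_pos_right hr0).2 h2
            · rw [sub_self, abs_zero]; positivity
        · rw [hzdef, Function.update_self]
          have h5 : x j ^ 2 / r ≤ x j / 2 := by
            rw [div_le_div_iff₀ hr0 (by norm_num : (0:ℝ) < 2)]
            nlinarith [hx0 j, hxT j]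
          linarith
      · have hxj0 : x j = 0 := le_antisymm (not_lt.1 hxj) (hx0 j)
        have hYeq : Y (k + 1) = Y k := by
          funext i
          simp only [hYdef]
          rcases lt_trichotomy (i : ℕ) k with h | h | h
          · rw [if_pos (by omega), if_pos h]
          · have hij : i = j := Fin.ext h
            rw [if_pos (by omega), if_neg (by omega), hij, hxj0]
            ring
          · rw [if_neg (by omega), if_neg (by omega)]
        rw [hYeq, if_neg hxj]
        simpa using le_of_lt hε'0
    have htel : r * (L x - L (fun i => x i - x i ^ 2 / r))
        = ∑ k ∈ Finset.range d, r * (L (Y k) - L (Y (k + 1))) := by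
      rw [← Finset.mul_sum, Finset.sum_range_sub' (fun k => L (Y k)), hY0, hYd]
    have hΓ : ∑ j : Fin d, (if 0 < x j then x j ^ 2 * Lj j x else 0)
        = ∑ k ∈ Finset.range d,
            (if hk : k < d then
              (if 0 < x ⟨k, hk⟩ then x ⟨k, hk⟩ ^ 2 * Lj ⟨k, hk⟩ x else 0) else 0) := by
      rw [← Fin.sum_univ_eq_sum_range]
      exact Finset.sum_congr rfl fun i _ => by simp [i.isLt]
    rw [Real.dist_eq, htel, hΓ, ← Finset.sum_sub_distrib]
    refine lt_of_le_of_lt (Finset.abs_sum_le_sum_abs _ _) ?_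
    have hstep : ∑ k ∈ Finset.range d,
        |(if hk : k < d then
            (if 0 < x ⟨k, hk⟩ then x ⟨k, hk⟩ ^ 2 * Lj ⟨k, hk⟩ x else 0) else 0)
          - r * (L (Y k) - L (Y (k + 1)))|
        ≤ ∑ _k ∈ Finset.range d, ε / (2 * (d : ℝ) + 2) := by
      refine Finset.sum_le_sum fun k hk => ?_
      have hkd : k < d := Finset.mem_range.1 hk
      rw [dif_pos hkd, abs_sub_comm]
      exact hterm k hkd
    refine lt_of_le_of_lt hstep ?_
    rw [Finset.sum_const, Finset.card_range, nsmul_eq_mul, mul_div_assoc',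
      div_lt_iff₀ (by positivity)]
    nlinarith [Nat.cast_nonneg (α := ℝ) d, hε]
end
end

section
/- Let C be a copula lying in the copula domain of attraction of the extreme-value copula C_∞ associated with the stable tail dependence function L. Suppose Condition (SO)_p holds with continuous non-null S_p and with α_p regularly varying at infinity of index ρ_p ≤ 0, and suppose 2r·α_p(r) → ∞ as r → ∞. Then Condition (SO)_b holds with α_b ≡ α_p and S_b(e^{−x}) = −C_∞(e^{−x})·S_p(x); that is, (C(u^{1/r})^r − C_∞(u))/α_p(r) → −C_∞(u)·S_p(−log u_1,…,−log u_d) as r → ∞, uniformly in u ∈ [δ,1]^d for every δ ∈ (0,1). -/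
open Filter Topology

noncomputable section

private lemma aux_log_one_sub {s : ℝ} (hs : |s| ≤ 1/2) : |Real.log (1 - s) + s| ≤ 2 * s^2 := by
  have hs1 : s ≤ 1/2 := (abs_le.mp hs).2
  have hs2 : -(1/2) ≤ s := (abs_le.mp hs).1
  have h0 : (0:ℝ) < 1 - s := by linarith
  have h1 : Real.log (1 - s) ≤ -s := by
    have := Real.log_le_sub_one_of_pos h0; linarith
  have h2' : (-Real.log (1-s)) * (1 - s) ≤ s := by
    have h3 := Real.log_le_sub_one_of_pos (inv_pos.mpr h0)
    rw [Real.log_inv] at h3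
    have h4 : (-Real.log (1-s)) * (1-s) ≤ ((1-s)⁻¹ - 1) * (1-s) := by nlinarith
    have h5 : ((1-s)⁻¹ - 1) * (1-s) = s := by field_simp; ring
    linarith
  rw [abs_le]
  refine ⟨?_, by nlinarith [sq_nonneg s]⟩
  set l := Real.log (1-s) with hl
  rcases le_or_gt 0 s with hc | hc
  · nlinarith
  · nlinarith

set_option maxHeartbeats 8000000 in
/-- Theorem 2.6 (a)(i). If (SO)_p holds with `α_p ∈ RV_{ρ_p}`, `ρ_p ≤ 0`,
and `2r·α_p(r) → ∞`, then (SO)_b holds with `α_b ≡ α_p` and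
`S_b(e^{−x}) = −C_∞(e^{−x})·S_p(x)`. -/
theorem statement9 {d : ℕ} (C L Sp : (Fin d → ℝ) → ℝ) (αp : ℝ → ℝ) (ρp : ℝ)
    (hL : IsSTDF d L) (hC : IsCopulaLike d C)
    (hDOA : PotDOA d C L)
    (hαpos : ∀ t : ℝ, 0 < t → 0 < αp t)
    (hα0 : Filter.Tendsto αp Filter.atTop (nhds 0))
    (hScont : ContinuousOn Sp (Set.Ici (0 : Fin d → ℝ)))
    (hSnonnull : ∃ x : Fin d → ℝ, (∀ j, 0 ≤ x j) ∧ Sp x ≠ 0)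
    (hSO : SOpot d C L Sp αp)
    (hρ : ρp ≤ 0) (hrv : RegVary αp ρp)
    (hcinf : Filter.Tendsto (fun r : ℝ => 2 * r * αp r) Filter.atTop Filter.atTop) :
    SObm d C (CinfFun d L)
      (fun u => -(CinfFun d L u * Sp (fun j => -Real.log (u j)))) αp := by
  classical
  unfold SObm
  unfold IsSTDF at hL
  unfold IsCopulaLike at hC
  unfold PotDOA at hDOA
  unfold SOpot at hSO
  -- L is nonnegative on the nonnegative orthant
  have hLnn : ∀ x : Fin d → ℝ, (∀ j, 0 ≤ x j) → 0 ≤ L x := by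
    intro x hx
    rcases isEmpty_or_nonempty (Fin d) with he | hne
    · have h2 : L ((2:ℝ) • x) = 2 * L x := hL.1 2 two_pos x hx
      have hxx : (2:ℝ) • x = x := by funext j; exact (he.false j).elim
      rw [hxx] at h2; linarith
    · obtain ⟨j⟩ := hne
      exact le_trans (hx j) ((hL.2.2.2 x hx).1 j)
  -- L is ℓ¹-Lipschitz on the nonnegative orthant
  have hLip : ∀ a b : Fin d → ℝ, (∀ j, 0 ≤ a j) → (∀ j, 0 ≤ b j) →
      |L a - L b| ≤ ∑ j, |a j - b j| := by
    intro a b hha hhb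
    set T' : ℝ := (∑ j, a j) + (∑ j, b j) + 1 with hT'
    have hsa : 0 ≤ ∑ j, a j := Finset.sum_nonneg fun i _ => hha i
    have hsb : 0 ≤ ∑ j, b j := Finset.sum_nonneg fun i _ => hhb i
    have hT'pos : 0 < T' := by rw [hT']; linarith
    have haT : ∀ j, a j ≤ T' := fun j => by
      have h1 : a j ≤ ∑ j, a j := Finset.single_le_sum (fun i _ => hha i) (Finset.mem_univ j)
      rw [hT']; linarith
    have hbT : ∀ j, b j ≤ T' := fun j => by
      have h1 : b j ≤ ∑ j, b j := Finset.single_le_sum (fun i _ => hhb i) (Finset.mem_univ j)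
      rw [hT']; linarith
    have hma : a ∈ Set.Icc (0 : Fin d → ℝ) (fun _ => T') := ⟨fun j => hha j, fun j => haT j⟩
    have hmb : b ∈ Set.Icc (0 : Fin d → ℝ) (fun _ => T') := ⟨fun j => hhb j, fun j => hbT j⟩
    have hta := (hDOA T' hT'pos).tendsto_at hma
    have htb := (hDOA T' hT'pos).tendsto_at hmb
    have htd := (hta.sub htb).abs
    refine le_of_tendsto htd ?_
    filter_upwards [eventually_ge_atTop T'] with t ht
    have ht0 : 0 < t := lt_of_lt_of_le hT'pos ht
    set A : Fin d → ℝ := fun j => 1 - a j / t with hA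
    set B : Fin d → ℝ := fun j => 1 - b j / t with hB
    have hAm : ∀ j, 0 ≤ A j ∧ A j ≤ 1 := by
      intro j
      have h1 : 0 ≤ a j / t := div_nonneg (hha j) ht0.le
      have h2 : a j / t ≤ 1 := by rw [div_le_one ht0]; exact le_trans (haT j) ht
      constructor <;> simp only [hA] <;> linarith
    have hBm : ∀ j, 0 ≤ B j ∧ B j ≤ 1 := by
      intro j
      have h1 : 0 ≤ b j / t := div_nonneg (hhb j) ht0.le
      have h2 : b j / t ≤ 1 := by rw [div_le_one ht0]; exact le_trans (hbT j) ht
      constructor <;> simp only [hB] <;> linarith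
    have hkey : t * (1 - C A) - t * (1 - C B) = t * (C B - C A) := by ring
    rw [hkey, abs_mul, abs_of_pos ht0]
    have hlip2 := hC.2.2 B A hBm hAm
    calc t * |C B - C A| ≤ t * ∑ j, |B j - A j| := mul_le_mul_of_nonneg_left hlip2 ht0.le
      _ = ∑ j, |a j - b j| := by
          rw [Finset.mul_sum]
          refine Finset.sum_congr rfl fun j _ => ?_
          have hBA : B j - A j = (a j - b j) / t := by simp only [hA, hB]; ring
          rw [hBA, abs_div, abs_of_pos ht0]; field_simp
  intro δ hδ0 hδ1
  have hTpos : 0 < -Real.log δ := by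
    have := Real.log_neg hδ0 hδ1; linarith
  set T : ℝ := -Real.log δ with hTdef
  have hT : 0 < T := hTpos
  have hKcomp : IsCompact (Set.Icc (0 : Fin d → ℝ) (fun _ => T)) := isCompact_Icc
  have hKsub : Set.Icc (0 : Fin d → ℝ) (fun _ => T) ⊆ Set.Ici 0 := Set.Icc_subset_Ici_self
  obtain ⟨M0, hM0⟩ := hKcomp.exists_bound_of_continuousOn (hScont.mono hKsub)
  set M : ℝ := max M0 0 with hM
  have hMnn : 0 ≤ M := le_max_right _ _
  have hMb : ∀ z ∈ Set.Icc (0 : Fin d → ℝ) (fun _ => T), |Sp z| ≤ M := fun z hz =>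
    le_trans (hM0 z hz) (le_max_left _ _)
  have hUC := Metric.uniformContinuousOn_iff.mp
    (hKcomp.uniformContinuousOn_of_continuous (hScont.mono hKsub))
  have hra' : Tendsto (fun r : ℝ => r * αp r) atTop atTop := by
    rw [tendsto_atTop]
    intro b
    rw [tendsto_atTop] at hcinf
    filter_upwards [hcinf (2*b)] with r hr
    linarith
  rw [Metric.tendstoUniformlyOn_iff]
  intro ε hε
  set ε₁ : ℝ := min (ε/8) 1 with hε₁def
  have hε₁ : 0 < ε₁ := lt_min (by linarith) one_pos
  have hε₁le : ε₁ ≤ ε/8 := min_le_left _ _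
  have hε₁1 : ε₁ ≤ 1 := min_le_right _ _
  obtain ⟨η, hη, hmod⟩ := hUC ε₁ hε₁
  set D : ℝ := (d:ℝ) * T + 1 with hD
  have hDpos : 0 < D := by positivity
  set K : ℝ := 2 * D^2 + (d:ℝ) * T^2 with hK
  have hKpos : 0 < K := by positivity
  have hso := Metric.tendstoUniformlyOn_iff.mp (hSO T hT) ε₁ hε₁
  have hM3 : (0:ℝ) < M + 3 := by linarith
  have hc : 0 < min ((ε/2)/(M+3)^2) (1/(M+3)) :=
    lt_min (div_pos (by linarith) (pow_pos hM3 2)) (one_div_pos.mpr hM3)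
  have hαev : ∀ᶠ r in atTop, αp r < min ((ε/2)/(M+3)^2) (1/(M+3)) :=
    hα0.eventually (gt_mem_nhds hc)
  have hra := hra'.eventually_gt_atTop (K/ε₁)
  filter_upwards [hso, hαev, hra, eventually_gt_atTop (0:ℝ),
    eventually_ge_atTop T, eventually_ge_atTop (2*D), eventually_gt_atTop (T^2/η)]
    with r hso1 hαs hra1 hr0 hrT hrD hrη
  intro u hu
  show dist (-(CinfFun d L u * Sp fun j => -Real.log (u j)))
      ((C (fun j => u j ^ (1/r)) ^ r - CinfFun d L u) / αp r) < ε
  rw [Real.dist_eq]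
  have ha : 0 < αp r := hαpos r hr0
  set a := αp r with hadef
  have hu1 : ∀ j, δ ≤ u j := fun j => hu.1 j
  have hu2 : ∀ j, u j ≤ 1 := fun j => hu.2 j
  have hu0 : ∀ j, 0 < u j := fun j => lt_of_lt_of_le hδ0 (hu1 j)
  set x : Fin d → ℝ := fun j => -Real.log (u j) with hxd
  have hx0 : ∀ j, 0 ≤ x j := by
    intro j; simp only [hxd]
    have := Real.log_nonpos (hu0 j).le (hu2 j); linarith
  have hxT : ∀ j, x j ≤ T := by
    intro j; simp only [hxd, hTdef]
    have := Real.log_le_log hδ0 (hu1 j); linarith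
  set v : Fin d → ℝ := fun j => u j ^ (1/r) with hvd
  have hvexp : ∀ j, v j = Real.exp (-(x j / r)) := by
    intro j
    simp only [hvd, hxd]
    rw [Real.rpow_def_of_pos (hu0 j), mul_one_div]
    congr 1; ring
  set y : Fin d → ℝ := fun j => r * (1 - v j) with hyd
  have hsj : ∀ j, 0 ≤ x j / r ∧ x j / r ≤ 1 := fun j =>
    ⟨div_nonneg (hx0 j) hr0.le, by rw [div_le_one hr0]; exact le_trans (hxT j) hrT⟩
  have hv1 : ∀ j, v j ≤ 1 := by
    intro j; rw [hvexp j]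
    exact Real.exp_le_one_iff.mpr (by linarith [(hsj j).1])
  have hy0 : ∀ j, 0 ≤ y j := by
    intro j; simp only [hyd]
    exact mul_nonneg hr0.le (by linarith [hv1 j])
  have hyx : ∀ j, y j ≤ x j := by
    intro j
    have h1 := Real.add_one_le_exp (-(x j / r))
    simp only [hyd]; rw [hvexp j]
    have h2 : r * (x j / r) = x j := by field_simp
    have h3 : r * (1 - Real.exp (-(x j / r))) ≤ r * (x j / r) :=
      mul_le_mul_of_nonneg_left (by linarith) hr0.le
    linarith
  have hxy : ∀ j, x j - y j ≤ T^2 / r := by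
    intro j
    have habs := Real.abs_exp_sub_one_sub_id_le (x := -(x j / r))
      (by rw [abs_neg, abs_of_nonneg (hsj j).1]; exact (hsj j).2)
    rw [abs_le] at habs
    simp only [hyd]; rw [hvexp j]
    have h2 : r * (x j / r) = x j := by field_simp
    have h5 : r * (Real.exp (-(x j / r)) - 1 + x j / r) ≤ r * ((x j / r)^2) :=
      mul_le_mul_of_nonneg_left (by linarith [habs.2]) hr0.le
    have h6 : r * ((x j / r)^2) = (x j)^2 / r := by field_simp
    have h7 : (x j)^2 / r ≤ T^2 / r :=
      (div_le_div_iff_of_pos_right hr0).mpr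
        (by have h8 := mul_le_mul (hxT j) (hxT j) (hx0 j) (by linarith [hx0 j, hxT j])
            linarith [h8])
    linarith
  have hyT : ∀ j, y j ≤ T := fun j => le_trans (hyx j) (hxT j)
  have hymem : y ∈ Set.Icc (0 : Fin d → ℝ) (fun _ => T) := ⟨fun j => hy0 j, fun j => hyT j⟩
  have hxmem : x ∈ Set.Icc (0 : Fin d → ℝ) (fun _ => T) := ⟨fun j => hx0 j, fun j => hxT j⟩
  have hvy : (fun j => 1 - y j / r) = v := by
    funext j; simp only [hyd]; field_simp; ring
  have hso2 : dist (Sp y) ((r * (1 - C fun j => 1 - y j / r) - L y) / a) < ε₁ := hso1 y hymem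
  rw [hvy, Real.dist_eq] at hso2
  set g : ℝ := r * (1 - C v) with hgd
  have hgL : |g - L y - a * Sp y| ≤ ε₁ * a := by
    have heq : g - L y - a * Sp y = -(a * (Sp y - (g - L y)/a)) := by field_simp; ring
    rw [heq, abs_neg, abs_mul, abs_of_pos ha]
    have h2 := mul_le_mul_of_nonneg_left hso2.le ha.le
    linarith
  have hLy0 : 0 ≤ L y := hLnn y hy0
  have hLyub : L y ≤ (d:ℝ) * T := by
    have h1 := (hL.2.2.2 y hy0).2
    have h2 : ∑ j, y j ≤ ∑ _j : Fin d, T := Finset.sum_le_sum (fun j _ => hyT j)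
    simp only [Finset.sum_const, Finset.card_univ, Fintype.card_fin, nsmul_eq_mul] at h2
    linarith
  have hSyM : |Sp y| ≤ M := hMb y hymem
  have hSxM : |Sp x| ≤ M := hMb x hxmem
  have haM : a * (M + 3) < 1 := by
    have h2 := lt_of_lt_of_le hαs (min_le_right _ _)
    exact (lt_div_iff₀ hM3).mp h2
  have hgc := abs_le.mp hgL
  have hSyc := abs_le.mp hSyM
  have hgD : |g| ≤ D := by
    rw [abs_le, hD]
    have hp1 : a * Sp y ≤ a * M := mul_le_mul_of_nonneg_left hSyc.2 ha.le
    have hp2 : a * -M ≤ a * Sp y := mul_le_mul_of_nonneg_left hSyc.1 ha.le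
    have hp3 : 0 ≤ a * (1 - ε₁) := mul_nonneg ha.le (sub_nonneg.mpr hε₁1)
    have hdT0 : 0 ≤ (d:ℝ) * T := mul_nonneg (Nat.cast_nonneg d) hT.le
    constructor
    · linarith [hgc.1, hp2, hp3, haM, ha.le, hLy0]
    · linarith [hgc.2, hp1, hp3, haM, ha.le, hLyub]
  have hCv : C v = 1 - g / r := by rw [hgd]; field_simp; ring
  have hgr : |g / r| ≤ 1/2 := by
    rw [abs_div, abs_of_pos hr0, div_le_iff₀ hr0]
    linarith [hgD]
  have hCvpos : 0 < C v := by
    rw [hCv]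
    have h1 := abs_le.mp hgr
    linarith [h1.2]
  have hpow : C v ^ r = Real.exp (r * Real.log (C v)) := by
    rw [Real.rpow_def_of_pos hCvpos, mul_comm]
  have hlogb : |r * Real.log (C v) + g| ≤ 2 * D^2 / r := by
    have h1 := aux_log_one_sub hgr
    rw [← hCv] at h1
    have h2 : r * Real.log (C v) + g = r * (Real.log (C v) + g / r) := by field_simp
    rw [h2, abs_mul, abs_of_pos hr0]
    have h3 : r * |Real.log (C v) + g / r| ≤ r * (2 * (g/r)^2) :=
      mul_le_mul_of_nonneg_left h1 hr0.le
    have h4 : r * (2 * (g/r)^2) = 2 * g^2 / r := by field_simp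
    have h5 : g^2 ≤ D^2 := by
      linarith [mul_self_le_mul_self (abs_nonneg g) hgD, sq_abs g]
    have h7 : 2 * g^2 / r ≤ 2 * D^2 / r :=
      (div_le_div_iff_of_pos_right hr0).mpr (by linarith)
    linarith
  have hdistyx : dist y x < η := by
    rw [dist_pi_lt_iff hη]
    intro j
    rw [Real.dist_eq, abs_of_nonpos (by linarith [hyx j] : y j - x j ≤ 0)]
    have hTr : T^2 / r < η := by
      rw [div_lt_iff₀ hr0]
      rw [div_lt_iff₀ hη] at hrη
      linarith
    have h9 : -(y j - x j) = x j - y j := by ring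
    rw [h9]
    exact lt_of_le_of_lt (hxy j) hTr
  have hSpc : |Sp y - Sp x| < ε₁ := by
    have h1 := hmod y hymem x hxmem hdistyx
    rwa [Real.dist_eq] at h1
  have hLxy : |L y - L x| ≤ (d:ℝ) * (T^2 / r) := by
    have h1 := hLip y x hy0 hx0
    have h2 : ∑ j, |y j - x j| ≤ ∑ _j : Fin d, T^2/r := by
      apply Finset.sum_le_sum; intro j _
      rw [abs_of_nonpos (by linarith [hyx j] : y j - x j ≤ 0)]
      linarith [hxy j]
    simp only [Finset.sum_const, Finset.card_univ, Fintype.card_fin, nsmul_eq_mul] at h2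
    linarith
  set w : ℝ := r * Real.log (C v) + L x with hwd
  set Err : ℝ := w + a * Sp x with hErrd
  have hSpc2 : |a * (Sp y - Sp x)| ≤ a * ε₁ := by
    rw [abs_mul, abs_of_pos ha]
    exact mul_le_mul_of_nonneg_left hSpc.le ha.le
  have hKr : 2 * D^2 / r + (d:ℝ) * (T^2 / r) < ε₁ * a := by
    have h1 : K < r * a * ε₁ := (div_lt_iff₀ hε₁).mp hra1
    have h2 : 2 * D^2 / r + (d:ℝ) * (T^2 / r) = K / r := by rw [hK]; field_simp
    rw [h2, div_lt_iff₀ hr0]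
    linarith [h1]
  have hErrb : |Err| ≤ 3 * ε₁ * a := by
    have h3 : Err = (r * Real.log (C v) + g) + -(g - L y - a * Sp y) + -(L y - L x)
        + -(a * (Sp y - Sp x)) := by rw [hErrd, hwd]; ring
    have t1 := abs_add_le (r * Real.log (C v) + g + -(g - L y - a * Sp y) + -(L y - L x))
      (-(a * (Sp y - Sp x)))
    have t2 := abs_add_le (r * Real.log (C v) + g + -(g - L y - a * Sp y)) (-(L y - L x))
    have t3 := abs_add_le (r * Real.log (C v) + g) (-(g - L y - a * Sp y))
    simp only [abs_neg] at t1 t2 t3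
    rw [h3]
    linarith [hlogb, hgL, hLxy, hSpc2, hKr, t1, t2, t3]
  have hwabs : |w| ≤ a * (M + 3) := by
    have h1 : w = Err - a * Sp x := by rw [hErrd]; ring
    rw [h1]
    have h2 : |Err - a * Sp x| ≤ |Err| + |a * Sp x| := by
      calc |Err - a * Sp x| = |Err + -(a * Sp x)| := by ring_nf
        _ ≤ |Err| + |-(a * Sp x)| := abs_add_le _ _
        _ = |Err| + |a * Sp x| := by rw [abs_neg]
    have h3 : |a * Sp x| ≤ a * M := by
      rw [abs_mul, abs_of_pos ha]; exact mul_le_mul_of_nonneg_left hSxM ha.le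
    linarith [hErrb, h2, h3, mul_nonneg ha.le (sub_nonneg.mpr hε₁1)]
  have hw1 : |w| ≤ 1 := le_trans hwabs haM.le
  have hexpw := Real.abs_exp_sub_one_sub_id_le hw1
  have hCinf : CinfFun d L u = Real.exp (-(L x)) := by
    unfold CinfFun
    rw [if_pos hu0, ← hxd]
  have hCrw : C v ^ r = Real.exp (-(L x)) * Real.exp w := by
    rw [hpow, ← Real.exp_add]; congr 1; rw [hwd]; ring
  have hexpLx : Real.exp (-(L x)) ≤ 1 :=
    Real.exp_le_one_iff.mpr (by linarith [hLnn x hx0])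
  have hkey : (C v ^ r - CinfFun d L u) / a - (-(CinfFun d L u * Sp x))
      = Real.exp (-(L x)) * ((Real.exp w - 1 - w) / a + Err / a) := by
    rw [hCinf, hCrw, hErrd]; field_simp; ring
  have hfinal : |(C v ^ r - CinfFun d L u) / a - (-(CinfFun d L u * Sp x))| < ε := by
    rw [hkey, abs_mul, abs_of_pos (Real.exp_pos _)]
    have e1 : |(Real.exp w - 1 - w) / a| ≤ (a * (M+3))^2 / a := by
      rw [abs_div, abs_of_pos ha]
      apply (div_le_div_iff_of_pos_right ha).mpr
      calc |Real.exp w - 1 - w| ≤ w^2 := hexpw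
        _ ≤ (a * (M+3))^2 := by
            linarith [mul_self_le_mul_self (abs_nonneg w) hwabs, sq_abs w]
    have e2 : |Err / a| ≤ 3 * ε₁ := by
      rw [abs_div, abs_of_pos ha, div_le_iff₀ ha]
      linarith [hErrb]
    have t1 : |(Real.exp w - 1 - w) / a + Err / a| ≤ (a * (M+3))^2 / a + 3 * ε₁ :=
      le_trans (abs_add_le _ _) (by linarith)
    have t2 : (a * (M+3))^2 / a = a * (M+3)^2 := by field_simp
    have t3 : a * (M+3)^2 < ε/2 := by
      have h2 := lt_of_lt_of_le hαs (min_le_left _ _)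
      rw [lt_div_iff₀ (pow_pos hM3 2)] at h2; linarith
    calc Real.exp (-(L x)) * |(Real.exp w - 1 - w) / a + Err / a|
        ≤ 1 * ((a * (M+3))^2 / a + 3 * ε₁) :=
          mul_le_mul hexpLx t1 (abs_nonneg _) zero_le_one
      _ < ε := by rw [one_mul, t2]; linarith [hε₁le]
  rw [abs_sub_comm]
  exact hfinal
end
end

section
/- Let C be a copula lying in the copula domain of attraction of the extreme-value copula C_∞ associated with the stable tail dependence function L. Suppose Condition (SO)_b holds with continuous non-null S_b and with α_b regularly varying of index ρ_b ≤ 0, and suppose 2r·α_b(r) → ∞ as r → ∞. Then Condition (SO)_p holds with α_p ≡ α_b and S_p(x) = −S_b(e^{−x})/C_∞(e^{−x}); that is, (t(1 − C(1 − x/t)) − L(x))/α_b(t) → −S_b(e^{−x_1},…,e^{−x_d})/C_∞(e^{−x_1},…,e^{−x_d}) as t → ∞, uniformly in x ∈ [0,T]^d for every T > 0. -/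
open Filter Topology

noncomputable section

lemma aux_abs_log_le {a : ℝ} (h : |a - 1| ≤ 1/2) : |Real.log a| ≤ 2 * |a - 1| := by
  have h1 := abs_le.mp h
  have hapos : 0 < a := by linarith [h1.1]
  rcases le_or_gt 1 a with hge | hlt
  · have hlog0 : 0 ≤ Real.log a := Real.log_nonneg hge
    have := Real.log_le_sub_one_of_pos hapos
    rw [abs_of_nonneg hlog0, abs_of_nonneg (by linarith : (0:ℝ) ≤ a - 1)]
    linarith
  · have hlog0 : Real.log a ≤ 0 := Real.log_nonpos (le_of_lt hapos) (le_of_lt hlt)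
    have hinv : Real.log a⁻¹ ≤ a⁻¹ - 1 := Real.log_le_sub_one_of_pos (by positivity)
    rw [Real.log_inv] at hinv
    rw [abs_of_nonpos hlog0, abs_of_nonpos (by linarith : a - 1 ≤ 0)]
    have : a⁻¹ - 1 ≤ 2 * (1 - a) := by
      rw [sub_le_iff_le_add, inv_le_iff_one_le_mul₀ hapos]
      nlinarith
    linarith

lemma aux_log_approx {z : ℝ} (h : |z| ≤ 1/2) : |Real.log (1 + z) - z| ≤ 4 * z^2 := by
  have hz1 : -(1:ℝ)/2 ≤ z := by linarith [(abs_le.mp h).1]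
  have hpos : 0 < 1 + z := by linarith
  set y := Real.log (1 + z) with hy
  have hay : |y| ≤ 2 * |z| := by
    have := aux_abs_log_le (a := 1 + z) (by simpa using h)
    simpa using this
  have hy1 : |y| ≤ 1 := by linarith [abs_le.mp h]
  have hexp : Real.exp y = 1 + z := Real.exp_log hpos
  have hb := Real.abs_exp_sub_one_sub_id_le hy1
  rw [hexp] at hb
  have h2 : |z - y| ≤ y^2 := by
    simpa [add_sub_cancel_left] using hb
  have h3 : y^2 ≤ 4 * z^2 := by
    nlinarith [sq_abs y, sq_abs z, abs_nonneg z, abs_nonneg y, hay]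
  calc |y - z| = |z - y| := abs_sub_comm y z
    _ ≤ y^2 := h2
    _ ≤ 4 * z^2 := h3

set_option maxHeartbeats 1000000 in
/-- Theorem 2.6 (b)(i). If (SO)_b holds with `α_b ∈ RV_{ρ_b}`, `ρ_b ≤ 0`,
and `2r·α_b(r) → ∞`, then (SO)_p holds with `α_p ≡ α_b` and
`S_p(x) = −S_b(e^{−x})/C_∞(e^{−x})`. -/
theorem statement12 {d : ℕ} (C L Sb : (Fin d → ℝ) → ℝ) (αb : ℝ → ℝ) (ρb : ℝ)
    (hL : IsSTDF d L) (hC : IsCopulaLike d C)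
    (hDOA : PotDOA d C L)
    (hαpos : ∀ r : ℝ, 0 < r → 0 < αb r)
    (hα0 : Filter.Tendsto αb Filter.atTop (nhds 0))
    (hScont : ContinuousOn Sb (Set.Icc (0 : Fin d → ℝ) (fun _ => 1)))
    (hSnonnull : ∃ u : Fin d → ℝ, (∀ j, 0 ≤ u j ∧ u j ≤ 1) ∧ Sb u ≠ 0)
    (hSO : SObm d C (CinfFun d L) Sb αb)
    (hρ : ρb ≤ 0) (hrv : RegVary αb ρb)
    (hcinf : Filter.Tendsto (fun r : ℝ => 2 * r * αb r) Filter.atTop Filter.atTop) :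
    SOpot d C L
      (fun x => -(Sb (fun j => Real.exp (-x j))
        / CinfFun d L (fun j => Real.exp (-x j)))) αb := by
  intro T hT
  rw [Metric.tendstoUniformlyOn_iff]
  intro ε hε
  obtain ⟨M, hM⟩ := isCompact_Icc.exists_bound_of_continuousOn hScont
  have hM0 : 0 ≤ M :=
    le_trans (norm_nonneg _) (hM 0 ⟨le_rfl, fun j => zero_le_one⟩)
  have hM1 : (0:ℝ) < M + 1 := by linarith
  set c : ℝ := Real.exp (-((d:ℝ) * T)) with hc_def
  have hc : 0 < c := Real.exp_pos _
  set ε₁ : ℝ := min (ε * c / 4) 1 with hε₁def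
  have hε₁pos : 0 < ε₁ := lt_min (by positivity) one_pos
  have hε₁le : ε₁ ≤ ε * c / 4 := min_le_left _ _
  have hε₁le1 : ε₁ ≤ 1 := min_le_right _ _
  set δ : ℝ := Real.exp (-T) with hδdef
  have hδpos : 0 < δ := Real.exp_pos _
  have hδlt : δ < 1 := by
    rw [hδdef]
    calc Real.exp (-T) < Real.exp 0 := Real.exp_lt_exp.mpr (by linarith)
      _ = 1 := Real.exp_zero
  have hSOe := (Metric.tendstoUniformlyOn_iff.mp (hSO δ hδpos hδlt)) ε₁ hε₁pos
  have hta : Filter.Tendsto (fun r : ℝ => r * αb r) Filter.atTop Filter.atTop := by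
    have h2 := hcinf.atTop_div_const (by norm_num : (0:ℝ) < 2)
    exact h2.congr (fun r => by ring)
  set N : ℝ := (d:ℝ) * T^2 + 4 * ((d:ℝ)*T)^2 with hN_def
  have hN0 : 0 ≤ N := by positivity
  set K : ℝ := (N + 1) * (2/ε) with hK_def
  have hK : 0 < K := by positivity
  have hE2 : ∀ᶠ t in Filter.atTop, K ≤ t * αb t := hta.eventually_ge_atTop K
  set A : ℝ := min (c / (2*(M+1))) (ε * c^2 / (32 * (M+1)^2)) with hA_def
  have hA : 0 < A := lt_min (by positivity) (by positivity)
  have hE3 : ∀ᶠ t in Filter.atTop, |αb t| < A := by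
    have := Metric.tendsto_nhds.mp hα0 A hA
    simpa [Real.dist_eq] using this
  have hE4 : ∀ᶠ t : ℝ in Filter.atTop, 0 < αb t :=
    (Filter.eventually_gt_atTop 0).mono (fun t ht => hαpos t ht)
  have hE1 : ∀ᶠ t : ℝ in Filter.atTop, max T (4*((d:ℝ)*T)+1) ≤ t :=
    Filter.eventually_ge_atTop _
  filter_upwards [hE1, hE2, hE3, hE4, hSOe] with t ht1 ht2 ht3 ht4 htSO
  intro x hx
  show dist (-(Sb (fun j => Real.exp (-x j)) / CinfFun d L (fun j => Real.exp (-x j))))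
      ((t * (1 - C (fun j => 1 - x j / t)) - L x) / αb t) < ε
  have htT : T ≤ t := le_trans (le_max_left _ _) ht1
  have ht4d : 4*((d:ℝ)*T) + 1 ≤ t := le_trans (le_max_right _ _) ht1
  have hdT0 : 0 ≤ (d:ℝ)*T := by positivity
  have ht0 : (0:ℝ) < t := by linarith
  have hα : 0 < αb t := ht4
  have hαne : αb t ≠ 0 := ne_of_gt hα
  have hxmem : ∀ j, 0 ≤ x j ∧ x j ≤ T := fun j =>
    ⟨by have := hx.1 j; simpa using this, by have := hx.2 j; simpa using this⟩
  set u : Fin d → ℝ := fun j => Real.exp (-x j) with hu_def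
  have humem : u ∈ Set.Icc (fun _ => δ) (fun _ => (1:ℝ)) := by
    refine ⟨fun j => ?_, fun j => ?_⟩
    · exact Real.exp_le_exp.mpr (neg_le_neg (hxmem j).2)
    · calc Real.exp (-x j) ≤ Real.exp 0 := Real.exp_le_exp.mpr (by linarith [(hxmem j).1])
        _ = 1 := Real.exp_zero
  have hu01 : u ∈ Set.Icc (0 : Fin d → ℝ) (fun _ => 1) :=
    ⟨fun j => (Real.exp_pos _).le, humem.2⟩
  have hSbM : |Sb u| ≤ M := by
    have := hM u hu01
    simpa [Real.norm_eq_abs] using this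
  have hLx_ub : L x ≤ (d:ℝ) * T := by
    have h := (hL.2.2.2 x (fun j => (hxmem j).1)).2
    calc L x ≤ ∑ j, x j := h
      _ ≤ ∑ _j : Fin d, T := Finset.sum_le_sum (fun j _ => (hxmem j).2)
      _ = (d:ℝ) * T := by
          rw [Finset.sum_const, Finset.card_univ, Fintype.card_fin, nsmul_eq_mul]
  set CI : ℝ := Real.exp (-(L x)) with hCI_def
  have hCI0 : 0 < CI := Real.exp_pos _
  have hCIne : CI ≠ 0 := ne_of_gt hCI0
  have hCIc : c ≤ CI := Real.exp_le_exp.mpr (by linarith)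
  have hCIval : CinfFun d L u = CI := by
    rw [hCI_def]
    simp only [CinfFun]
    rw [if_pos (fun j => Real.exp_pos (-x j))]
    have hfx : (fun j => -Real.log (u j)) = x := by
      funext j
      simp [hu_def, Real.log_exp]
    rw [hfx]
  have hSOu : dist (Sb u) ((C (fun j => u j ^ ((1:ℝ)/t)) ^ t - CinfFun d L u) / αb t) < ε₁ :=
    htSO u humem
  have harg : (fun j => u j ^ ((1:ℝ)/t)) = (fun j => Real.exp (-(x j / t))) := by
    funext j
    show Real.exp (-x j) ^ ((1:ℝ)/t) = Real.exp (-(x j / t))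
    rw [← Real.exp_mul]
    congr 1
    ring
  rw [harg, hCIval] at hSOu
  set Q : ℝ := C (fun j => Real.exp (-(x j / t))) with hQ_def
  set P : ℝ := C (fun j => 1 - x j / t) with hP_def
  have hamem : ∀ j, 0 ≤ Real.exp (-(x j / t)) ∧ Real.exp (-(x j / t)) ≤ 1 := by
    intro j
    refine ⟨(Real.exp_pos _).le, ?_⟩
    calc Real.exp (-(x j / t)) ≤ Real.exp 0 := by
          apply Real.exp_le_exp.mpr
          have h0 : 0 ≤ x j / t := div_nonneg (hxmem j).1 ht0.le
          linarith
      _ = 1 := Real.exp_zero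
  have hxt1 : ∀ j, x j / t ≤ 1 := by
    intro j
    rw [div_le_one ht0]
    linarith [(hxmem j).2]
  have hbmem : ∀ j, 0 ≤ 1 - x j / t ∧ 1 - x j / t ≤ 1 := by
    intro j
    constructor
    · linarith [hxt1 j]
    · have : 0 ≤ x j / t := div_nonneg (hxmem j).1 ht0.le
      linarith
  have hlower : ∀ j, 1 - x j / t ≤ Real.exp (-(x j / t)) := by
    intro j
    have := Real.add_one_le_exp (-(x j / t))
    linarith
  have hQ1 : |Q - 1| ≤ (d:ℝ)*T/t := by
    have h1 : C (fun _ => 1) = 1 := hC.1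
    have hlip := hC.2.2 (fun j => Real.exp (-(x j / t))) (fun _ => 1) hamem
      (fun j => ⟨zero_le_one, le_rfl⟩)
    rw [h1] at hlip
    refine hlip.trans ?_
    calc ∑ j, |Real.exp (-(x j / t)) - 1| ≤ ∑ _j : Fin d, T/t := by
          refine Finset.sum_le_sum (fun j _ => ?_)
          rw [abs_of_nonpos (by linarith [(hamem j).2] : Real.exp (-(x j / t)) - 1 ≤ 0)]
          have h1j := hlower j
          have h2j : x j / t ≤ T / t := by
            gcongr
            exact (hxmem j).2
          linarith
      _ = (d:ℝ)*T/t := by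
          rw [Finset.sum_const, Finset.card_univ, Fintype.card_fin, nsmul_eq_mul]
          ring
  have hdTt : (d:ℝ)*T/t ≤ 1/4 := by
    rw [div_le_iff₀ ht0]
    linarith
  have hQpos : 0 < Q := by
    have h := abs_le.mp hQ1
    linarith [h.1]
  have hlogQ : |Real.log Q| ≤ 2*((d:ℝ)*T/t) := by
    have h := aux_abs_log_le (a := Q) (hQ1.trans (by linarith))
    calc |Real.log Q| ≤ 2 * |Q - 1| := h
      _ ≤ 2*((d:ℝ)*T/t) := by linarith
  have hQP : |Q - P| ≤ (d:ℝ)*T^2/t^2 := by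
    have hlip := hC.2.2 (fun j => Real.exp (-(x j / t))) (fun j => 1 - x j / t) hamem hbmem
    refine hlip.trans ?_
    calc ∑ j, |Real.exp (-(x j / t)) - (1 - x j / t)| ≤ ∑ _j : Fin d, T^2/t^2 := by
          refine Finset.sum_le_sum (fun j _ => ?_)
          have habs : |(-(x j / t))| ≤ 1 := by
            rw [abs_neg, abs_of_nonneg (div_nonneg (hxmem j).1 ht0.le)]
            exact hxt1 j
          have h := Real.abs_exp_sub_one_sub_id_le habs
          have heq : Real.exp (-(x j / t)) - (1 - x j / t)
              = Real.exp (-(x j / t)) - 1 - (-(x j / t)) := by ring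
          rw [heq]
          refine h.trans ?_
          have hsq : (-(x j / t))^2 = (x j)^2/t^2 := by
            field_simp
          rw [hsq]
          gcongr
          · exact (hxmem j).1
          · exact (hxmem j).2
      _ = (d:ℝ)*T^2/t^2 := by
          rw [Finset.sum_const, Finset.card_univ, Fintype.card_fin, nsmul_eq_mul]
          ring
  set E : ℝ := Q ^ t with hE_def
  have hEpos : 0 < E := Real.rpow_pos_of_pos hQpos t
  set η : ℝ := (E - CI)/αb t with hη_def
  have hSOu' : |η - Sb u| < ε₁ := by
    rw [Real.dist_eq] at hSOu
    calc |η - Sb u| = |Sb u - η| := abs_sub_comm _ _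
      _ < ε₁ := hSOu
  have hηM : |η| ≤ M + 1 := by
    have h := abs_add_le (Sb u) (η - Sb u)
    have e : Sb u + (η - Sb u) = η := by ring
    rw [e] at h
    have := hSOu'.le
    linarith
  set z : ℝ := αb t * η / CI with hz_def
  have hzeq : z = (E - CI)/CI := by
    rw [hz_def, hη_def]
    field_simp
  have hαA : αb t < A := lt_of_le_of_lt (le_abs_self _) ht3
  have hαA1 : αb t ≤ c / (2*(M+1)) := le_trans hαA.le (min_le_left _ _)
  have hαA2 : αb t ≤ ε * c^2 / (32 * (M+1)^2) := le_trans hαA.le (min_le_right _ _)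
  have hzb : |z| ≤ αb t * (M+1) / c := by
    rw [hz_def, abs_div, abs_mul, abs_of_pos hCI0, abs_of_pos hα]
    gcongr
  have hz12 : |z| ≤ 1/2 := by
    refine hzb.trans ?_
    rw [le_div_iff₀ (by positivity : (0:ℝ) < 2*(M+1))] at hαA1
    rw [div_le_iff₀ hc]
    linarith only [hαA1]
  have h1z : 0 < 1 + z := by
    have h := abs_le.mp hz12
    linarith [h.1]
  have hlog1z : Real.log (1+z) = t * Real.log Q + L x := by
    have h1z' : 1 + z = E / CI := by
      rw [hzeq]
      field_simp
      ring
    rw [h1z', Real.log_div (ne_of_gt hEpos) hCIne, hE_def, Real.log_rpow hQpos,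
      hCI_def, Real.log_exp]
    ring
  have hQw : |1 - Q + Real.log Q| ≤ (Real.log Q)^2 := by
    have hwb : |Real.log Q| ≤ 1 := hlogQ.trans (by linarith)
    have h := Real.abs_exp_sub_one_sub_id_le hwb
    rw [Real.exp_log hQpos] at h
    calc |1 - Q + Real.log Q| = |Q - 1 - Real.log Q| := by
          rw [← abs_neg]
          congr 1
          ring
      _ ≤ (Real.log Q)^2 := h
  have hQw2 : |1 - Q + Real.log Q| ≤ 4*((d:ℝ)*T)^2/t^2 := by
    refine hQw.trans ?_
    have h := pow_le_pow_left₀ (abs_nonneg (Real.log Q)) hlogQ 2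
    rw [sq_abs] at h
    calc (Real.log Q)^2 ≤ (2*((d:ℝ)*T/t))^2 := h
      _ = 4*((d:ℝ)*T)^2/t^2 := by
          field_simp
          ring
  have hexpr : (t * (1 - P) - L x) / αb t - (-(Sb u / CI))
      = t*(Q - P)/αb t + t*(1 - Q + Real.log Q)/αb t
        + (-((Real.log (1+z) - z)/αb t)) + (-((η - Sb u)/CI)) := by
    rw [hlog1z, hz_def, hη_def]
    field_simp
    ring
  have hb1 : |t*(Q - P)/αb t| ≤ ((d:ℝ)*T^2) / (t * αb t) := by
    rw [abs_div, abs_mul, abs_of_pos ht0, abs_of_pos hα]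
    rw [div_le_div_iff₀ hα (by positivity)]
    have h' : |Q - P| * t^2 ≤ (d:ℝ)*T^2 := (le_div_iff₀ (by positivity)).mp hQP
    have hmul := mul_le_mul_of_nonneg_right h' hα.le
    calc t * |Q - P| * (t * αb t) = |Q - P| * t^2 * αb t := by ring
      _ ≤ (d:ℝ)*T^2*αb t := hmul
  have hb2 : |t*(1 - Q + Real.log Q)/αb t| ≤ (4*((d:ℝ)*T)^2) / (t * αb t) := by
    rw [abs_div, abs_mul, abs_of_pos ht0, abs_of_pos hα]
    rw [div_le_div_iff₀ hα (by positivity)]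
    have h' : |1 - Q + Real.log Q| * t^2 ≤ 4*((d:ℝ)*T)^2 :=
      (le_div_iff₀ (by positivity)).mp hQw2
    have hmul := mul_le_mul_of_nonneg_right h' hα.le
    calc t * |1 - Q + Real.log Q| * (t * αb t) = |1 - Q + Real.log Q| * t^2 * αb t := by ring
      _ ≤ 4*((d:ℝ)*T)^2*αb t := hmul
  have hb3 : |(Real.log (1+z) - z)/αb t| ≤ ε/8 := by
    rw [abs_div, abs_of_pos hα, div_le_iff₀ hα]
    have h4 := aux_log_approx hz12
    have hzsq : z^2 ≤ (αb t * (M+1)/c)^2 := by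
      rw [← sq_abs z]
      exact pow_le_pow_left₀ (abs_nonneg z) hzb 2
    refine h4.trans ?_
    rw [le_div_iff₀ (by positivity : (0:ℝ) < 32 * (M+1)^2)] at hαA2
    have hexp2 : (αb t * (M+1)/c)^2 = (αb t)^2 * (M+1)^2 / c^2 := by
      field_simp
    have hkey : 4 * ((αb t)^2 * (M+1)^2 / c^2) ≤ ε/8 * αb t := by
      have hG : 4 * ((αb t)^2 * (M+1)^2 / c^2) = (4*(αb t)^2*(M+1)^2)/c^2 := by ring
      rw [hG, div_le_iff₀ (by positivity : (0:ℝ) < c^2)]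
      have hmul := mul_le_mul_of_nonneg_left hαA2 hα.le
      linarith only [hmul]
    calc 4 * z^2 ≤ 4 * ((αb t * (M+1)/c)^2) := by linarith
      _ = 4 * ((αb t)^2 * (M+1)^2 / c^2) := by rw [hexp2]
      _ ≤ ε/8 * αb t := hkey
  have hb4 : |(η - Sb u)/CI| ≤ ε/4 := by
    rw [abs_div, abs_of_pos hCI0]
    have h1 : |η - Sb u| / CI ≤ ε₁ / c := by
      gcongr
      all_goals first
        | exact hc
        | exact hCIc
        | exact hSOu'.le
    refine h1.trans ?_
    rw [div_le_iff₀ hc]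
    linarith
  have hb12 : ((d:ℝ)*T^2) / (t * αb t) + (4*((d:ℝ)*T)^2) / (t * αb t) ≤ ε/2 := by
    have htαpos : 0 < t * αb t := by positivity
    rw [← add_div, ← hN_def, div_le_iff₀ htαpos]
    have hKval : ε/2 * K = N + 1 := by
      rw [hK_def]
      field_simp
    have hmono : ε/2 * K ≤ ε/2 * (t*αb t) :=
      mul_le_mul_of_nonneg_left ht2 (by positivity)
    linarith only [hKval, hmono, hN0]
  rw [Real.dist_eq, abs_sub_comm, hCIval]
  have habs : |((t * (1 - P) - L x) / αb t) - (-(Sb u / CI))|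
      ≤ |t*(Q - P)/αb t| + |t*(1 - Q + Real.log Q)/αb t|
        + |(Real.log (1+z) - z)/αb t| + |(η - Sb u)/CI| := by
    rw [hexpr]
    refine le_trans (abs_add_le _ _) ?_
    refine add_le_add ?_ (le_of_eq (abs_neg _))
    refine le_trans (abs_add_le _ _) ?_
    refine add_le_add ?_ (le_of_eq (abs_neg _))
    exact abs_add_le _ _
  have : |((t * (1 - P) - L x) / αb t) - (-(Sb u / CI))| ≤ ε/2 + ε/8 + ε/4 := by
    calc |((t * (1 - P) - L x) / αb t) - (-(Sb u / CI))|
        ≤ |t*(Q - P)/αb t| + |t*(1 - Q + Real.log Q)/αb t|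
          + |(Real.log (1+z) - z)/αb t| + |(η - Sb u)/CI| := habs
      _ ≤ (((d:ℝ)*T^2) / (t * αb t) + (4*((d:ℝ)*T)^2) / (t * αb t)) + ε/8 + ε/4 := by
          exact add_le_add (add_le_add (add_le_add hb1 hb2) hb3) hb4
      _ ≤ ε/2 + ε/8 + ε/4 := by linarith
  linarith
end
end
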